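/- arXiv:2605.23761 — 4 statements merged into one kernel-verified Lean document; each statement's English description precedes it below -/
import Mathlib

section
/- Let A = Aᵀ ∈ ℝ^{n×n}, b ∈ ℝⁿ, x₀ ∈ ℝⁿ, and run the full orthogonalization method (FOM): build the Arnoldi basis V_k and Hessenberg matrix T_k = V_kᵀAV_k with initial vector v₁ = r₀/‖r₀‖ where r₀ = b − Ax₀, and set x_k^{FOM} = x₀ + V_k w_k where T_k w_k = β e₁, β = ‖r₀‖. If T_k is nonsingular for k = 1,…,j, then x_k^{FOM} equals the k-th iterate of CG (i.e., PCG with H₀ = I) applied to Ax = b from the same x₀, for each k = 1,…,j. -/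
open Matrix

/-- For a symmetric matrix `A`, if the Hessenberg matrices
`T_k = V_kᵀ A V_k` produced by the Arnoldi process are nonsingular for `k = 1,…,j`,
then the FOM iterates coincide with the CG iterates started from the same point. -/
theorem fom_eq_cg
    (n : ℕ) (A : Matrix (Fin n) (Fin n) ℝ) (hA : A.IsSymm)
    (b x0 : Fin n → ℝ) (j : ℕ)
    (β : ℝ) (hβ : β = Real.sqrt ((b - A *ᵥ x0) ⬝ᵥ (b - A *ᵥ x0)))
    -- Arnoldi process (vectors indexed from 1)
    (v : ℕ → Fin n → ℝ) (t : ℕ → ℕ → ℝ)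
    (hv1 : v 1 = β⁻¹ • (b - A *ᵥ x0))
    (horth : ∀ i l, 1 ≤ i → i ≤ j + 1 → 1 ≤ l → l ≤ j + 1 →
      v i ⬝ᵥ v l = if i = l then 1 else 0)
    (harn : ∀ k, 1 ≤ k → k ≤ j →
      A *ᵥ v k = (∑ i ∈ Finset.Icc 1 k, t i k • v i) + t (k+1) k • v (k+1))
    (htpos : ∀ k, 1 ≤ k → k ≤ j → 0 < t (k+1) k)
    -- the Krylov basis and Hessenberg matrices
    (V : (k : ℕ) → Matrix (Fin n) (Fin k) ℝ)
    (hV : ∀ k, ∀ (r : Fin n) (c : Fin k), V k r c = v ((c : ℕ) + 1) r)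
    (T : (k : ℕ) → Matrix (Fin k) (Fin k) ℝ)
    (hT : ∀ k, T k = (V k)ᵀ * A * V k)
    -- the FOM iterates
    (w : (k : ℕ) → Fin k → ℝ)
    (hw : ∀ k, 1 ≤ k → k ≤ j →
      T k *ᵥ w k = fun i : Fin k => if (i : ℕ) = 0 then β else 0)
    (xF : ℕ → Fin n → ℝ)
    (hxF : ∀ k, 1 ≤ k → k ≤ j → xF k = x0 + V k *ᵥ w k)
    -- the Hessenberg matrices are nonsingular for k = 1,…,j
    (hTns : ∀ k, 1 ≤ k → k ≤ j → IsUnit (T k))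
    -- CG (PCG with H₀ = I) from the same starting point
    (xC dC gC : ℕ → Fin n → ℝ)
    (hgC : ∀ k, gC k = A *ᵥ xC k - b)
    (hxC0 : xC 0 = x0)
    (hdC0 : dC 0 = -gC 0)
    (hdC : ∀ k, dC (k+1) = -gC (k+1) + ((gC (k+1) ⬝ᵥ gC (k+1)) / (gC k ⬝ᵥ gC k)) • dC k)
    (hxC : ∀ k, xC (k+1) = xC k + ((gC k ⬝ᵥ gC k) / (dC k ⬝ᵥ (A *ᵥ dC k))) • dC k) :
    ∀ k, 1 ≤ k → k ≤ j → xF k = xC k := by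
  -- symmetry of the bilinear form
  have hsym : ∀ x y : Fin n → ℝ, (A *ᵥ x) ⬝ᵥ y = x ⬝ᵥ (A *ᵥ y) := by
    intro x y
    rw [Matrix.dotProduct_mulVec, ← Matrix.mulVec_transpose, hA.eq]
  have hv11 : v 1 ⬝ᵥ v 1 = 1 := by
    simpa using horth 1 1 le_rfl (by omega) le_rfl (by omega)
  have hβ0 : β ≠ 0 := by
    intro h
    rw [h, _root_.inv_zero, zero_smul] at hv1
    rw [hv1] at hv11
    simpa using hv11
  have hr0 : b - A *ᵥ x0 = β • v 1 := by
    rw [hv1, smul_smul, mul_inv_cancel₀ hβ0, one_smul]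
  -- expansion of V k *ᵥ y
  have hVmul : ∀ (k : ℕ) (y : Fin k → ℝ), V k *ᵥ y = ∑ c : Fin k, y c • v ((c : ℕ) + 1) := by
    intro k y
    funext r
    simp [Matrix.mulVec, dotProduct, hV, Finset.sum_apply, mul_comm]
  have hVTmul : ∀ (k : ℕ) (z : Fin n → ℝ) (i : Fin k), ((V k)ᵀ *ᵥ z) i = v ((i : ℕ) + 1) ⬝ᵥ z := by
    intro k z i
    simp [Matrix.mulVec, dotProduct, Matrix.transpose_apply, hV, mul_comm]
  have hTmulVec : ∀ (k : ℕ) (z : Fin k → ℝ), T k *ᵥ z = (V k)ᵀ *ᵥ (A *ᵥ (V k *ᵥ z)) := by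
    intro k z
    rw [hT, Matrix.mulVec_mulVec, Matrix.mulVec_mulVec]
  -- dot products with sums
  have hdotsum : ∀ (m : ℕ) (f : Fin m → Fin n → ℝ) (x : Fin n → ℝ),
      x ⬝ᵥ (∑ i, f i) = ∑ i, x ⬝ᵥ f i := by
    intro m f x
    simp only [dotProduct, Finset.sum_apply, Finset.mul_sum]
    exact Finset.sum_comm
  have hsumdot : ∀ (s : Finset ℕ) (f : ℕ → Fin n → ℝ) (x : Fin n → ℝ),
      (∑ i ∈ s, f i) ⬝ᵥ x = ∑ i ∈ s, f i ⬝ᵥ x := by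
    intro s f x
    simp only [dotProduct, Finset.sum_apply, Finset.sum_mul]
    exact Finset.sum_comm
  have hVdot : ∀ (m : ℕ) (u : Fin m → ℝ) (z : Fin n → ℝ),
      (V m *ᵥ u) ⬝ᵥ z = ∑ i : Fin m, u i * (v ((i : ℕ) + 1) ⬝ᵥ z) := by
    intro m u z
    rw [hVmul]
    simp only [dotProduct, Finset.sum_apply, Finset.sum_mul, Pi.smul_apply,
      smul_eq_mul, Finset.mul_sum, mul_assoc]
    exact Finset.sum_comm
  have hAlin : ∀ (m : ℕ) (a : Fin m → ℝ) (f : Fin m → Fin n → ℝ),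
      A *ᵥ (∑ i, a i • f i) = ∑ i, a i • (A *ᵥ f i) := by
    intro m a f
    rw [← A.mulVecLin_apply, map_sum]
    simp
  -- the nested Krylov subspaces
  have hvS : ∀ m p, 1 ≤ p → p ≤ m →
      v p ∈ Submodule.span ℝ (Set.range fun i : Fin m => v ((i : ℕ) + 1)) := by
    intro m p h1 h2
    apply Submodule.subset_span
    refine ⟨⟨p - 1, by omega⟩, ?_⟩
    show v (p - 1 + 1) = v p
    rw [Nat.sub_add_cancel h1]
  have hSmono : ∀ m m', m ≤ m' →
      Submodule.span ℝ (Set.range fun i : Fin m => v ((i : ℕ) + 1)) ≤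
      Submodule.span ℝ (Set.range fun i : Fin m' => v ((i : ℕ) + 1)) := by
    intro m m' h
    apply Submodule.span_mono
    rintro _ ⟨i, rfl⟩
    exact ⟨⟨(i : ℕ), by omega⟩, rfl⟩
  have hAvS : ∀ p, 1 ≤ p → p ≤ j →
      A *ᵥ v p ∈ Submodule.span ℝ (Set.range fun i : Fin (p+1) => v ((i : ℕ) + 1)) := by
    intro p h1 h2
    rw [harn p h1 h2]
    apply Submodule.add_mem
    · apply Submodule.sum_mem
      intro i hi
      simp only [Finset.mem_Icc] at hi
      exact Submodule.smul_mem _ _ (hvS _ _ hi.1 (by omega))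
    · exact Submodule.smul_mem _ _ (hvS _ _ (by omega) le_rfl)
  -- extraction of the last coordinate
  have hextract : ∀ m, m + 1 ≤ j + 1 → ∀ g : Fin n → ℝ,
      g ∈ Submodule.span ℝ (Set.range fun i : Fin (m+1) => v ((i : ℕ) + 1)) →
      (∀ i, 1 ≤ i → i ≤ m → v i ⬝ᵥ g = 0) → g = (v (m+1) ⬝ᵥ g) • v (m+1) := by
    intro m hm g hg hperp
    obtain ⟨a, ha⟩ := (Submodule.mem_span_range_iff_exists_fun ℝ).mp hg
    have hcoef : ∀ i : Fin (m+1), v ((i : ℕ) + 1) ⬝ᵥ g = a i := by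
      intro i
      rw [← ha, hdotsum]
      have hterm : ∀ c : Fin (m+1),
          v ((i : ℕ) + 1) ⬝ᵥ (a c • v ((c : ℕ) + 1)) = if c = i then a c else 0 := by
        intro c
        rw [dotProduct_smul,
          horth _ _ (by omega) (by have := i.isLt; omega) (by omega) (by have := c.isLt; omega)]
        by_cases h : c = i
        · subst h; simp
        · have h2 : ¬((i : ℕ) + 1 = (c : ℕ) + 1) := by
            simp only [Fin.ext_iff] at h; omega
          simp [h2, h]
          exact fun hic => absurd (by omega) h2
      rw [Finset.sum_congr rfl fun c _ => hterm c, Finset.sum_ite_eq' _ i a]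
      simp
    have hz : ∀ c : Fin m, a c.castSucc = 0 := by
      intro c
      rw [← hcoef c.castSucc]
      simp only [Fin.coe_castSucc]
      exact hperp _ (by omega) (by have := c.isLt; omega)
    conv_lhs => rw [← ha]
    rw [Fin.sum_univ_castSucc]
    simp only [hz, zero_smul, Finset.sum_const_zero, zero_add]
    rw [← hcoef (Fin.last m)]
    simp [Fin.last]
  -- invertibility of T m gives injectivity
  have hTinj : ∀ m, 1 ≤ m → m ≤ j → ∀ z : Fin m → ℝ, T m *ᵥ z = 0 → z = 0 := by
    intro m h1 h2 z h
    have h3 : (T m)⁻¹ *ᵥ (T m *ᵥ z) = z := by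
      rw [Matrix.mulVec_mulVec,
        Matrix.nonsing_inv_mul (T m) ((Matrix.isUnit_iff_isUnit_det (T m)).mp (hTns m h1 h2)),
        Matrix.one_mulVec]
    rw [h, Matrix.mulVec_zero] at h3
    exact h3.symm
  -- A-products of basis vectors
  have hAvv : ∀ p q, 1 ≤ p → p ≤ j → 1 ≤ q → q ≤ j + 1 →
      v q ⬝ᵥ (A *ᵥ v p) = if q ≤ p + 1 then t q p else 0 := by
    intro p q h1 h2 h3 h4
    rw [harn p h1 h2, dotProduct_add, dotProduct_smul]
    have hIcc : v q ⬝ᵥ (∑ i ∈ Finset.Icc 1 p, t i p • v i)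
        = if q ∈ Finset.Icc 1 p then t q p else 0 := by
      rw [show v q ⬝ᵥ (∑ i ∈ Finset.Icc 1 p, t i p • v i)
            = ∑ i ∈ Finset.Icc 1 p, v q ⬝ᵥ (t i p • v i) by
          rw [dotProduct_comm, hsumdot]
          exact Finset.sum_congr rfl fun i _ => dotProduct_comm _ _]
      rw [Finset.sum_congr rfl (fun i hi => ?_), Finset.sum_ite_eq _ q (fun i => t i p)]
      simp only [Finset.mem_Icc] at hi
      rw [dotProduct_smul, horth q i h3 h4 hi.1 (by omega)]
      by_cases h : q = i
      · subst h; simp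
      · simp [h]
    rw [hIcc, horth q (p+1) h3 h4 (by omega) (by omega)]
    simp only [Finset.mem_Icc]
    by_cases hqp : q ≤ p
    · have : ¬ q = p + 1 := by omega
      simp [h3, hqp, this, show q ≤ p + 1 by omega]
    · by_cases hqp1 : q = p + 1
      · simp [hqp1, show ¬ (1 ≤ p + 1 ∧ p + 1 ≤ p) by omega]
      · simp [show ¬(1 ≤ q ∧ q ≤ p) by omega, hqp1, show ¬ q ≤ p + 1 by omega]
  -- snoc expansion
  have hsnoc : ∀ (m : ℕ) (u : Fin m → ℝ) (a : ℝ),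
      V (m+1) *ᵥ Fin.snoc u a = V m *ᵥ u + a • v (m+1) := by
    intro m u a
    rw [hVmul, hVmul, Fin.sum_univ_castSucc]
    simp
  -- uniqueness of the Galerkin solution
  have huniq : ∀ k, 1 ≤ k → k ≤ j → ∀ (y : Fin k → ℝ) (x : Fin n → ℝ),
      x = x0 + V k *ᵥ y → (∀ i, 1 ≤ i → i ≤ k → v i ⬝ᵥ (A *ᵥ x - b) = 0) → x = xF k := by
    intro k hk1 hkj y x hx hgal
    have hAVy : A *ᵥ (V k *ᵥ y) = (A *ᵥ x - b) + β • v 1 := by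
      rw [hx, Matrix.mulVec_add, ← hr0]
      abel
    have hTy : T k *ᵥ y = T k *ᵥ w k := by
      rw [hw k hk1 hkj, hTmulVec]
      funext i
      rw [hVTmul, hAVy, dotProduct_add, dotProduct_smul,
        hgal ((i : ℕ) + 1) (by omega) (by have := i.isLt; omega),
        horth ((i : ℕ) + 1) 1 (by omega) (by have := i.isLt; omega) le_rfl (by omega)]
      by_cases h : (i : ℕ) = 0
      · simp [h]
      · simp [h, show ¬((i : ℕ) + 1 = 1) by omega]
    have hyw : y = w k := by
      have h0 := hTinj k hk1 hkj (y - w k) (by rw [Matrix.mulVec_sub, hTy, sub_self])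
      exact sub_eq_zero.mp h0
    rw [hxF k hk1 hkj, hx, hyw]
  -- the main invariant, by induction
  have main : ∀ k, k ≤ j →
      (∃ y : Fin k → ℝ, xC k = x0 + V k *ᵥ y) ∧
      (∀ i, 1 ≤ i → i ≤ k → v i ⬝ᵥ gC k = 0) ∧
      gC k = (v (k+1) ⬝ᵥ gC k) • v (k+1) ∧
      (∃ u : Fin k → ℝ, dC k = V k *ᵥ u + (-(v (k+1) ⬝ᵥ gC k)) • v (k+1)) ∧
      (∀ i, 1 ≤ i → i ≤ k → v i ⬝ᵥ (A *ᵥ dC k) = 0) := by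
    intro k
    induction k with
    | zero =>
      intro _
      have hg0 : gC 0 = (-β) • v 1 := by
        rw [hgC 0, hxC0, ← neg_sub b (A *ᵥ x0), hr0, neg_smul]
      have hdot : v 1 ⬝ᵥ gC 0 = -β := by
        rw [hg0, dotProduct_smul, hv11]
        simp
      refine ⟨⟨0, ?_⟩, ?_, ?_, ⟨0, ?_⟩, ?_⟩
      · rw [hxC0, hVmul]; simp
      · intro i h1 h2; omega
      · show gC 0 = (v 1 ⬝ᵥ gC 0) • v 1
        rw [hdot, hg0]
      · show dC 0 = V 0 *ᵥ 0 + (-(v 1 ⬝ᵥ gC 0)) • v 1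
        rw [hdot, hdC0, hg0, hVmul]
        simp
      · intro i h1 h2; omega
    | succ k ih =>
      intro hk1j
      have hkj : k ≤ j := by omega
      obtain ⟨⟨y, hy⟩, hAg, hB, ⟨u, hu⟩, hD⟩ := ih hkj
      set c := v (k+1) ⬝ᵥ gC k with hcdef
      set s := v (k+1) ⬝ᵥ (A *ᵥ dC k) with hsdef
      have hzdk : dC k = V (k+1) *ᵥ Fin.snoc u (-c) := by rw [hsnoc, hu]
      have hAdk : A *ᵥ dC k = ∑ i : Fin (k+1), (Fin.snoc u (-c) : Fin (k+1) → ℝ) i • (A *ᵥ v ((i : ℕ) + 1)) := by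
        conv_lhs => rw [hzdk, hVmul]
        exact hAlin _ _ _
      by_cases hc0 : c = 0
      · -- breakdown branch : the gradient already vanishes
        have hgk0 : gC k = 0 := by rw [hB, hc0, zero_smul]
        have hx1 : xC (k+1) = xC k := by rw [hxC k, hgk0]; simp
        have hg1 : gC (k+1) = 0 := by rw [hgC (k+1), hx1, ← hgC k, hgk0]
        have hd1 : dC (k+1) = 0 := by rw [hdC k, hg1]; simp
        refine ⟨⟨Fin.snoc y 0, ?_⟩, ?_, ?_, ⟨0, ?_⟩, ?_⟩
        · rw [hx1, hy, hsnoc]; simp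
        · intro i h1 h2; rw [hg1, dotProduct_zero]
        · rw [hg1]; simp
        · rw [hd1, hg1, Matrix.mulVec_zero]; simp
        · intro i h1 h2; rw [hd1, Matrix.mulVec_zero, dotProduct_zero]
      · -- main branch
        have hsne : s ≠ 0 := by
          intro hs0
          have hz0 : T (k+1) *ᵥ Fin.snoc u (-c) = 0 := by
            rw [hTmulVec, ← hzdk]
            funext i
            simp only [Pi.zero_apply]
            rw [hVTmul]
            by_cases hik : (i : ℕ) < k
            · exact hD _ (by omega) (by omega)
            · have hieq : (i : ℕ) = k := by have := i.isLt; omega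
              rw [hieq, ← hsdef]
              exact hs0
          have hzz := hTinj (k+1) (by omega) hk1j _ hz0
          have hlast := congrFun hzz (Fin.last k)
          rw [Fin.snoc_last] at hlast
          simp only [Pi.zero_apply] at hlast
          exact hc0 (neg_eq_zero.mp hlast)
        have hgg : gC k ⬝ᵥ gC k = c * c := by
          conv_lhs => rw [hB]
          rw [smul_dotProduct, dotProduct_smul,
            horth (k+1) (k+1) (by omega) (by omega) (by omega) (by omega)]
          simp
        have hdAd : dC k ⬝ᵥ (A *ᵥ dC k) = -(c * s) := by
          nth_rewrite 1 [hu]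
          rw [add_dotProduct, smul_dotProduct, hVdot]
          rw [Finset.sum_congr rfl (fun i (_ : i ∈ Finset.univ) => by
            rw [hD ((i : ℕ) + 1) (by omega) (by have := i.isLt; omega), mul_zero])]
          rw [← hsdef]
          simp [smul_eq_mul]
        have hαs : (gC k ⬝ᵥ gC k) / (dC k ⬝ᵥ (A *ᵥ dC k)) * s = -c := by
          rw [hgg, hdAd]
          field_simp
        have hg1 : gC (k+1) = gC k + ((gC k ⬝ᵥ gC k) / (dC k ⬝ᵥ (A *ᵥ dC k))) • (A *ᵥ dC k) := by
          rw [hgC (k+1), hxC k, Matrix.mulVec_add, Matrix.mulVec_smul, hgC k]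
          abel
        have hperp1 : ∀ i, 1 ≤ i → i ≤ k+1 → v i ⬝ᵥ gC (k+1) = 0 := by
          intro i h1 h2
          rw [hg1, dotProduct_add, dotProduct_smul, smul_eq_mul]
          rcases Nat.lt_or_ge i (k+1) with h | h
          · rw [hAg i h1 (by omega), hD i h1 (by omega), mul_zero, add_zero]
          · have hieq : i = k+1 := by omega
            rw [hieq, ← hcdef, ← hsdef, hαs]
            ring
        have hxk1 : xC (k+1) = x0 + V (k+1) *ᵥ
            ((Fin.snoc y 0 : Fin (k+1) → ℝ) + ((gC k ⬝ᵥ gC k) / (dC k ⬝ᵥ (A *ᵥ dC k))) • (Fin.snoc u (-c) : Fin (k+1) → ℝ)) := by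
          rw [Matrix.mulVec_add, Matrix.mulVec_smul, hsnoc, ← hzdk, hxC k, hy]
          rw [zero_smul, add_zero]
          abel
        have hgm : gC (k+1) ∈ Submodule.span ℝ (Set.range fun i : Fin (k+1+1) => v ((i : ℕ) + 1)) := by
          rw [hg1]
          refine Submodule.add_mem _ ?_ (Submodule.smul_mem _ _ ?_)
          · rw [hB]
            exact Submodule.smul_mem _ _ (hvS _ _ (by omega) (by omega))
          · rw [hAdk]
            refine Submodule.sum_mem _ fun i _ => Submodule.smul_mem _ _ ?_
            exact hSmono _ _ (by have := i.isLt; omega)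
              (hAvS ((i : ℕ) + 1) (by omega) (by have := i.isLt; omega))
        have hB1 : gC (k+1) = (v (k+1+1) ⬝ᵥ gC (k+1)) • v (k+1+1) :=
          hextract (k+1) (by omega) _ hgm hperp1
        have hgg1 : gC (k+1) ⬝ᵥ gC (k+1)
            = (v (k+1+1) ⬝ᵥ gC (k+1)) * (v (k+1+1) ⬝ᵥ gC (k+1)) := by
          conv_lhs => rw [hB1]
          rw [smul_dotProduct, dotProduct_smul,
            horth (k+1+1) (k+1+1) (by omega) (by omega) (by omega) (by omega)]
          simp
        have h0 : v (k+1+1) ⬝ᵥ gC k = 0 := by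
          conv_lhs => rw [hB]
          rw [dotProduct_smul,
            horth (k+1+1) (k+1) (by omega) (by omega) (by omega) (by omega)]
          simp [show ¬(k+1+1 = k+1) by omega]
        have h2 : v (k+1+1) ⬝ᵥ (A *ᵥ dC k) = -(c * t (k+1+1) (k+1)) := by
          rw [hAdk, hdotsum, Fin.sum_univ_castSucc]
          simp only [Fin.snoc_castSucc, Fin.snoc_last, Fin.coe_castSucc, Fin.val_last]
          have hzz : ∀ i : Fin k, v (k+1+1) ⬝ᵥ (u i • (A *ᵥ v ((i : ℕ) + 1))) = 0 := by
            intro i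
            rw [dotProduct_smul,
              hAvv ((i : ℕ) + 1) (k+1+1) (by omega) (by have := i.isLt; omega) (by omega) (by omega)]
            have hne : ¬ (k+1+1 ≤ (i : ℕ) + 1 + 1) := by have := i.isLt; omega
            simp [hne]
          rw [Finset.sum_congr rfl (fun i _ => hzz i), Finset.sum_const_zero, zero_add,
            dotProduct_smul,
            hAvv (k+1) (k+1+1) (by omega) (by omega) (by omega) (by omega)]
          simp
        have hc1s : (v (k+1+1) ⬝ᵥ gC (k+1)) * s = c * c * t (k+1+1) (k+1) := by
          have h1 : v (k+1+1) ⬝ᵥ gC (k+1)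
              = ((gC k ⬝ᵥ gC k) / (dC k ⬝ᵥ (A *ᵥ dC k))) * (-(c * t (k+1+1) (k+1))) := by
            rw [hg1, dotProduct_add, dotProduct_smul, smul_eq_mul, h0, h2, zero_add]
          rw [h1, show (gC k ⬝ᵥ gC k) / (dC k ⬝ᵥ (A *ᵥ dC k)) * (-(c * t (k+1+1) (k+1))) * s
              = (gC k ⬝ᵥ gC k) / (dC k ⬝ᵥ (A *ᵥ dC k)) * s * (-(c * t (k+1+1) (k+1))) by ring, hαs]
          ring
        have hd1 : dC (k+1) = V (k+1) *ᵥ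
            (((gC (k+1) ⬝ᵥ gC (k+1)) / (gC k ⬝ᵥ gC k)) • (Fin.snoc u (-c) : Fin (k+1) → ℝ))
            + (-(v (k+1+1) ⬝ᵥ gC (k+1))) • v (k+1+1) := by
          rw [hdC k, Matrix.mulVec_smul, ← hzdk]
          nth_rewrite 1 [hB1]
          rw [neg_smul]
          abel
        have hAd1 : A *ᵥ dC (k+1)
            = -((v (k+1+1) ⬝ᵥ gC (k+1)) • (A *ᵥ v (k+1+1)))
              + ((gC (k+1) ⬝ᵥ gC (k+1)) / (gC k ⬝ᵥ gC k)) • (A *ᵥ dC k) := by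
          rw [hdC k, Matrix.mulVec_add, Matrix.mulVec_neg, Matrix.mulVec_smul]
          nth_rewrite 1 [hB1]
          rw [Matrix.mulVec_smul]
        have hD1 : ∀ i, 1 ≤ i → i ≤ k+1 → v i ⬝ᵥ (A *ᵥ dC (k+1)) = 0 := by
          intro i h1 h2
          have hvav : v i ⬝ᵥ (A *ᵥ v (k+1+1)) = if k+1+1 ≤ i + 1 then t (k+1+1) i else 0 := by
            rw [← hsym, dotProduct_comm]
            exact hAvv i (k+1+1) h1 (by omega) (by omega) (by omega)
          rw [hAd1, dotProduct_add, dotProduct_neg, dotProduct_smul,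
            dotProduct_smul, hvav]
          rcases Nat.lt_or_ge i (k+1) with h | h
          · rw [hD i h1 (by omega)]
            simp [show ¬(k+1+1 ≤ i + 1) by omega]
          · have hieq : i = k+1 := by omega
            rw [hieq, ← hsdef, hgg, hgg1]
            simp only [show k+1+1 ≤ k+1+1 from le_rfl, if_true, smul_eq_mul]
            have hcc : c * c ≠ 0 := mul_ne_zero hc0 hc0
            field_simp
            linear_combination (v (k+1+1) ⬝ᵥ gC (k+1)) * hc1s
        exact ⟨⟨_, hxk1⟩, hperp1, hB1, ⟨_, hd1⟩, hD1⟩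
  -- conclusion
  intro k hk1 hkj
  obtain ⟨⟨y, hy⟩, hAg, -, -, -⟩ := main k hkj
  exact (huniq k hk1 hkj y (xC k) hy (fun i h1 h2 => by
    rw [show A *ᵥ xC k - b = gC k from (hgC k).symm]
    exact hAg i h1 h2)).symm
end

section
/- In DIOM applied to Ax = b with A symmetric, and q(x) = ½xᵀAx − bᵀx with gradient g_k = Ax_k − b = −r_k, suppose P_kᵀAP_k is symmetric positive definite for k = 1,…,j. Then g₀ᵀp₁ = −β/u_{1,1}, and for k ≥ 1, g_kᵀp_{k+1} = (−1)^{k−1} t_{k+1,k}|ζ_k| / (u_{k,k} u_{k+1,k+1}). In particular, the sign of g_kᵀp_{k+1} alternates with k, so p_{k+1} is not a descent direction for q at x_k for every k. -/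
open Matrix

private lemma fin_sum_two {m : ℕ} (f : Fin m → ℝ) (a c : Fin m) (hac : a ≠ c)
    (h : ∀ q : Fin m, q ≠ a → q ≠ c → f q = 0) :
    ∑ q : Fin m, f q = f a + f c := by
  rw [← Finset.sum_pair hac]
  refine (Finset.sum_subset (Finset.subset_univ _) ?_).symm
  intro q _ hq
  simp only [Finset.mem_insert, Finset.mem_singleton] at hq
  push_neg at hq
  exact h q hq.1 hq.2

private lemma sum_dotProduct' {ι : Type*} {n : ℕ} (s : Finset ι) (f : ι → Fin n → ℝ)
    (w : Fin n → ℝ) : (∑ i ∈ s, f i) ⬝ᵥ w = ∑ i ∈ s, f i ⬝ᵥ w := by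
  simp only [dotProduct, Finset.sum_apply, Finset.sum_mul]
  rw [Finset.sum_comm]

private lemma mulVec_sum' {ι : Type*} {n : ℕ} (A : Matrix (Fin n) (Fin n) ℝ)
    (s : Finset ι) (f : ι → Fin n → ℝ) :
    A *ᵥ (∑ i ∈ s, f i) = ∑ i ∈ s, A *ᵥ f i := by
  ext r
  simp only [Matrix.mulVec, dotProduct, Finset.sum_apply, Finset.mul_sum]
  rw [Finset.sum_comm]

/-- In DIOM with `P_kᵀ A P_k` symmetric positive definite for
`k = 1,…,j`, the DIOM directions satisfy `g₀ᵀp₁ = −β/u_{1,1}` and, for `k ≥ 1`,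
`g_kᵀp_{k+1} = (−1)^{k−1} t_{k+1,k}|ζ_k|/(u_{k,k}u_{k+1,k+1})`; in particular the sign
alternates and `p_{k+1}` is an ascent direction whenever `k` is odd, so `p_{k+1}` is not
a descent direction for every `k`. -/
theorem diom_directions_not_always_descent
    (n : ℕ) (A : Matrix (Fin n) (Fin n) ℝ) (hA : A.IsSymm)
    (b x0 : Fin n → ℝ) (j : ℕ)
    (β : ℝ) (hβ : β = Real.sqrt ((b - A *ᵥ x0) ⬝ᵥ (b - A *ᵥ x0)))
    (hr0 : b - A *ᵥ x0 ≠ 0)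
    -- Lanczos process (vectors indexed from 1)
    (v : ℕ → Fin n → ℝ) (t : ℕ → ℕ → ℝ)
    (hv1 : v 1 = β⁻¹ • (b - A *ᵥ x0))
    (horth : ∀ i l, 1 ≤ i → i ≤ j + 1 → 1 ≤ l → l ≤ j + 1 →
      v i ⬝ᵥ v l = if i = l then 1 else 0)
    (harn : ∀ k, 1 ≤ k → k ≤ j →
      A *ᵥ v k = (∑ i ∈ Finset.Icc 1 k, t i k • v i) + t (k+1) k • v (k+1))
    (htpos : ∀ k, 1 ≤ k → k ≤ j → 0 < t (k+1) k)
    (V : (k : ℕ) → Matrix (Fin n) (Fin k) ℝ)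
    (hV : ∀ k, ∀ (r : Fin n) (c : Fin k), V k r c = v ((c : ℕ) + 1) r)
    (T : (k : ℕ) → Matrix (Fin k) (Fin k) ℝ)
    (hT : ∀ k, T k = (V k)ᵀ * A * V k)
    -- LU factorization T_k = L_k U_k
    (L U : (k : ℕ) → Matrix (Fin k) (Fin k) ℝ)
    (hLU : ∀ k, 1 ≤ k → k ≤ j → T k = L k * U k)
    (hLdiag : ∀ k, k ≤ j → ∀ i : Fin k, L k i i = 1)
    (hLlow : ∀ k, k ≤ j → ∀ i l : Fin k,
      (i : ℕ) ≠ (l : ℕ) → (i : ℕ) ≠ (l : ℕ) + 1 → L k i l = 0)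
    (hUtri : ∀ k, k ≤ j → ∀ i l : Fin k, (l : ℕ) < (i : ℕ) → U k i l = 0)
    -- pivots and subdiagonal multipliers as scalar sequences
    (uD : ℕ → ℝ)
    (huD : ∀ k, k ≤ j → ∀ i : Fin k, U k i i = uD ((i : ℕ) + 1))
    (ℓs : ℕ → ℝ)
    (hls : ∀ k, 1 ≤ k → k ≤ j → ℓs (k+1) = t (k+1) k / uD k)
    -- solution coefficients ζ_k
    (ζ : ℕ → ℝ) (hζ1 : ζ 1 = β)
    (hζ : ∀ k, 1 ≤ k → k ≤ j → ζ (k+1) = -ℓs (k+1) * ζ k)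
    -- P_k = V_k U_k⁻¹ with P_kᵀ A P_k symmetric positive definite
    (P : (k : ℕ) → Matrix (Fin n) (Fin k) ℝ)
    (hP : ∀ k, P k = V k * (U k)⁻¹)
    (hSPD : ∀ k, 1 ≤ k → k ≤ j → ((P k)ᵀ * A * P k).PosDef)
    -- the DIOM direction vectors p_k (columns of P_k) and iterates
    (p : ℕ → Fin n → ℝ)
    (hpcol : ∀ k, 1 ≤ k → k ≤ j → ∀ c : Fin k, p ((c : ℕ) + 1) = fun r => P k r c)
    (x : ℕ → Fin n → ℝ)
    (hx0 : x 0 = x0)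
    (hx : ∀ k, 1 ≤ k → k ≤ j → x k = x (k - 1) + ζ k • p k) :
    (1 ≤ j → (A *ᵥ x 0 - b) ⬝ᵥ p 1 = -β / uD 1) ∧
    (∀ k, 1 ≤ k → k + 1 ≤ j →
      (A *ᵥ x k - b) ⬝ᵥ p (k+1) =
        (-1 : ℝ) ^ (k - 1) * (t (k+1) k * |ζ k|) / (uD k * uD (k+1))) ∧
    (∀ k, 1 ≤ k → k + 1 ≤ j → Odd k → 0 < (A *ᵥ x k - b) ⬝ᵥ p (k+1)) := by
  -- β is positive
  have hr0sq : 0 < (b - A *ᵥ x0) ⬝ᵥ (b - A *ᵥ x0) := by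
    have hnonneg : 0 ≤ (b - A *ᵥ x0) ⬝ᵥ (b - A *ᵥ x0) :=
      Finset.sum_nonneg fun i _ => mul_self_nonneg _
    refine hnonneg.lt_of_ne (Ne.symm fun h => hr0 ?_)
    exact dotProduct_self_eq_zero.mp h
  have hβpos : 0 < β := hβ ▸ Real.sqrt_pos.mpr hr0sq
  have hβne : β ≠ 0 := ne_of_gt hβpos
  have hβv : β • v 1 = b - A *ᵥ x0 := by
    rw [hv1, smul_smul, mul_inv_cancel₀ hβne, one_smul]
  -- entries of T
  have hTent : ∀ m, m ≤ j → ∀ i l : Fin m,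
      T m i l = v ((i : ℕ) + 1) ⬝ᵥ (A *ᵥ v ((l : ℕ) + 1)) := by
    intro m hm i l
    rw [hT]
    simp only [Matrix.mul_apply, Matrix.transpose_apply, Matrix.mulVec, dotProduct, hV,
      Finset.sum_mul, Finset.mul_sum]
    rw [Finset.sum_comm]
    exact Finset.sum_congr rfl fun r _ => Finset.sum_congr rfl fun s _ => by ring
  have hTval : ∀ m, m ≤ j → ∀ i l : Fin m,
      T m i l = (if (i : ℕ) ≤ (l : ℕ) + 1 then t ((i : ℕ)+1) ((l : ℕ)+1) else 0) := by
    intro m hm i l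
    have hil : (i : ℕ) < m := i.isLt
    have hll : (l : ℕ) < m := l.isLt
    rw [hTent m hm, harn ((l : ℕ)+1) (by omega) (by omega), dotProduct_add]
    have h1 : v ((i:ℕ)+1) ⬝ᵥ (∑ q ∈ Finset.Icc 1 ((l:ℕ)+1), t q ((l:ℕ)+1) • v q)
        = ∑ q ∈ Finset.Icc 1 ((l:ℕ)+1), t q ((l:ℕ)+1) * (v ((i:ℕ)+1) ⬝ᵥ v q) := by
      simp only [dotProduct, Finset.sum_apply, Pi.smul_apply, smul_eq_mul, Finset.mul_sum,
        Finset.sum_mul]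
      rw [Finset.sum_comm]
      exact Finset.sum_congr rfl fun q _ => Finset.sum_congr rfl fun r _ => by ring
    have h2 : v ((i:ℕ)+1) ⬝ᵥ (t ((l:ℕ)+2) ((l:ℕ)+1) • v ((l:ℕ)+2))
        = t ((l:ℕ)+2) ((l:ℕ)+1) * (v ((i:ℕ)+1) ⬝ᵥ v ((l:ℕ)+2)) := by
      simp only [dotProduct, Pi.smul_apply, smul_eq_mul, Finset.mul_sum]
      exact Finset.sum_congr rfl fun r _ => by ring
    rw [h1, h2]
    have h3 : ∀ q ∈ Finset.Icc 1 ((l:ℕ)+1),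
        t q ((l:ℕ)+1) * (v ((i:ℕ)+1) ⬝ᵥ v q)
          = if (i:ℕ)+1 = q then t q ((l:ℕ)+1) else 0 := by
      intro q hq
      rw [Finset.mem_Icc] at hq
      rw [horth ((i:ℕ)+1) q (by omega) (by omega) (by omega) (by omega)]
      split_ifs <;> ring
    rw [Finset.sum_congr rfl h3, Finset.sum_ite_eq _ ((i:ℕ)+1) (fun q => t q ((l:ℕ)+1))]
    rw [horth ((i:ℕ)+1) ((l:ℕ)+2) (by omega) (by omega) (by omega) (by omega)]
    by_cases hc1 : (i:ℕ) ≤ (l:ℕ)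
    · rw [if_pos (Finset.mem_Icc.mpr ⟨by omega, by omega⟩), if_neg (by omega),
        if_pos (by omega)]
      ring
    · by_cases hc2 : (i:ℕ) = (l:ℕ)+1
      · rw [if_neg (fun hmem => by have := Finset.mem_Icc.mp hmem; omega),
          if_pos (by omega), if_pos (by omega), hc2]
        ring
      · rw [if_neg (fun hmem => by have := Finset.mem_Icc.mp hmem; omega),
          if_neg (by omega), if_neg (by omega)]
        ring
  have hTsymm : ∀ m, ∀ i l : Fin m, T m i l = T m l i := by
    intro m i l
    rw [hT]
    simp only [Matrix.mul_apply, Matrix.transpose_apply, Finset.sum_mul, Finset.mul_sum]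
    rw [Finset.sum_comm]
    refine Finset.sum_congr rfl fun s _ => ?_
    refine Finset.sum_congr rfl fun r _ => ?_
    have hArs : A r s = A s r := by
      conv_lhs => rw [← hA]
      rfl
    rw [hArs]; ring
  -- T is zero above the superdiagonal
  have hTupper : ∀ m, m ≤ j → ∀ i l : Fin m, (i:ℕ)+1 < (l:ℕ) → T m i l = 0 := by
    intro m hm i l h
    rw [hTsymm m i l, hTval m hm l i, if_neg (by omega)]
  -- decomposition of (L*U) entries
  have hLUrow : ∀ m, 1 ≤ m → m ≤ j → ∀ i l : Fin m,
      (∀ q : Fin m, (q:ℕ)+1 < (l:ℕ) ∨ ((q:ℕ) < (i:ℕ) ∧ (q:ℕ)+1 ≠ (i:ℕ)) → U m q l = 0) →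
      True := fun _ _ _ _ _ _ => trivial
  -- U is upper bidiagonal
  have hUbid : ∀ m, 1 ≤ m → m ≤ j → ∀ i l : Fin m, (i:ℕ)+1 < (l:ℕ) → U m i l = 0 := by
    intro m hm1 hm
    have key : ∀ N, ∀ i l : Fin m, (i:ℕ) ≤ N → (i:ℕ)+1 < (l:ℕ) → U m i l = 0 := by
      intro N
      induction N with
      | zero =>
        intro i l hi hil
        have hTeq := congrFun (congrFun (hLU m hm1 hm) i) l
        rw [Matrix.mul_apply] at hTeq
        have hcoll : ∑ q : Fin m, L m i q * U m q l = L m i i * U m i l := by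
          refine Finset.sum_eq_single_of_mem i (Finset.mem_univ i) fun q _ hq => ?_
          rw [hLlow m hm i q (fun hc => hq (Fin.ext hc.symm)) (by omega)]
          ring
        rw [hcoll, hLdiag m hm i, one_mul] at hTeq
        rw [← hTeq, hTupper m hm i l hil]
      | succ N ih =>
        intro i l hi hil
        by_cases hiN : (i:ℕ) ≤ N
        · exact ih i l hiN hil
        · have hiv : (i:ℕ) = N + 1 := by omega
          have hprev : 0 < (i:ℕ) := by omega
          set i' : Fin m := ⟨(i:ℕ) - 1, by omega⟩ with hi'
          have hTeq := congrFun (congrFun (hLU m hm1 hm) i) l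
          rw [Matrix.mul_apply] at hTeq
          have hii' : i ≠ i' := by
            intro hc
            have := congrArg (fun z : Fin m => (z:ℕ)) hc
            simp only [hi'] at this
            omega
          have hcoll : ∑ q : Fin m, L m i q * U m q l
              = L m i i * U m i l + L m i i' * U m i' l := by
            refine fin_sum_two _ i i' hii' fun q hq1 hq2 => ?_
            rw [hLlow m hm i q (fun hc => hq1 (Fin.ext hc.symm)) (fun hc => hq2 (Fin.ext (by
              simp only [hi']; omega)))]
            ring
          have hUi' : U m i' l = 0 := by
            refine ih i' l (by simp only [hi']; omega) (by simp only [hi']; omega)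
          rw [hcoll, hUi', hLdiag m hm i, one_mul, mul_zero, add_zero] at hTeq
          rw [← hTeq, hTupper m hm i l hil]
    intro i l h
    exact key (i:ℕ) i l le_rfl h
  -- superdiagonal entries of U
  have hUsup : ∀ m, 1 ≤ m → m ≤ j → ∀ i l : Fin m, (l:ℕ) = (i:ℕ)+1 →
      U m i l = t ((l:ℕ)+1) ((i:ℕ)+1) := by
    intro m hm1 hm i l hli
    have hTeq := congrFun (congrFun (hLU m hm1 hm) i) l
    rw [Matrix.mul_apply] at hTeq
    have hUval : ∑ q : Fin m, L m i q * U m q l = U m i l := by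
      by_cases h0 : (i:ℕ) = 0
      · rw [Finset.sum_eq_single_of_mem i (Finset.mem_univ i) fun q _ hq => by
          rw [hLlow m hm i q (fun hc => hq (Fin.ext hc.symm)) (by omega)]; ring]
        rw [hLdiag m hm i, one_mul]
      · set i' : Fin m := ⟨(i:ℕ) - 1, by omega⟩ with hi'
        have hii' : i ≠ i' := by
          intro hc
          have := congrArg (fun z : Fin m => (z:ℕ)) hc
          simp only [hi'] at this
          omega
        rw [fin_sum_two _ i i' hii' fun q hq1 hq2 => by
          rw [hLlow m hm i q (fun hc => hq1 (Fin.ext hc.symm)) (fun hc => hq2 (Fin.ext (by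
            simp only [hi']; omega)))]; ring]
        have : U m i' l = 0 := hUbid m hm1 hm i' l (by simp only [hi']; omega)
        rw [this, hLdiag m hm i, one_mul, mul_zero, add_zero]
    rw [hUval] at hTeq
    rw [← hTeq, hTsymm m i l, hTval m hm l i, if_pos (by omega)]
  -- U is invertible
  have hUunit : ∀ m, 1 ≤ m → m ≤ j → IsUnit (U m).det := by
    intro m hm1 hm
    by_contra h
    have hinv : (U m)⁻¹ = 0 := Matrix.nonsing_inv_apply_not_isUnit _ h
    have hP0 : P m = 0 := by rw [hP, hinv, Matrix.mul_zero]
    have hpd := hSPD m hm1 hm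
    rw [hP0] at hpd
    let i0 : Fin m := ⟨0, by omega⟩
    have hne : (Pi.single i0 (1:ℝ) : Fin m → ℝ) ≠ 0 := by
      intro hc
      have := congrFun hc i0
      simp at this
    have := hpd.dotProduct_mulVec_pos hne
    simp only [Matrix.transpose_zero, Matrix.zero_mul, Matrix.mul_zero,
      Matrix.zero_mulVec, dotProduct_zero] at this
    exact lt_irrefl 0 this
  have hUUinv : ∀ m, 1 ≤ m → m ≤ j → U m * (U m)⁻¹ = 1 := fun m h1 h2 =>
    Matrix.mul_nonsing_inv _ (hUunit m h1 h2)
  -- U⁻¹ is upper triangular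
  have hUinvtri : ∀ m, 1 ≤ m → m ≤ j → ∀ i l : Fin m, (l:ℕ) < (i:ℕ) → (U m)⁻¹ i l = 0 := by
    intro m hm1 hm
    haveI := (U m).invertibleOfIsUnitDet (hUunit m hm1 hm)
    have hbt : (U m).BlockTriangular id := fun i l h => hUtri m hm i l h
    have h2 := Matrix.blockTriangular_inv_of_blockTriangular hbt
    intro i l h
    exact h2 h
  -- diagonal of U⁻¹
  have hUinvdiag : ∀ m, 1 ≤ m → m ≤ j → ∀ i : Fin m,
      (U m)⁻¹ i i = (uD ((i:ℕ)+1))⁻¹ := by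
    intro m hm1 hm i
    have h := congrFun (congrFun (hUUinv m hm1 hm) i) i
    rw [Matrix.mul_apply, Matrix.one_apply_eq] at h
    rw [Finset.sum_eq_single_of_mem i (Finset.mem_univ i) (fun q _ hq => by
      rcases lt_or_gt_of_ne (fun hc : (q:ℕ) = (i:ℕ) => hq (Fin.ext hc)) with hlt | hgt
      · rw [hUtri m hm i q hlt]; ring
      · rw [hUinvtri m hm1 hm q i hgt]; ring)] at h
    rw [huD m hm i] at h
    exact eq_inv_of_mul_eq_one_right h
  -- P^T A P = (U⁻¹)ᵀ L
  have hMeq : ∀ m, 1 ≤ m → m ≤ j →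
      (P m)ᵀ * A * P m = ((U m)⁻¹)ᵀ * L m := by
    intro m hm1 hm
    have hVAV : (V m)ᵀ * A * V m = L m * U m := (hT m).symm.trans (hLU m hm1 hm)
    have h1 : (P m)ᵀ * A * P m = ((U m)⁻¹)ᵀ * ((V m)ᵀ * A * V m) * (U m)⁻¹ := by
      rw [hP, Matrix.transpose_mul]
      simp only [Matrix.mul_assoc]
    rw [h1, hVAV]
    calc ((U m)⁻¹)ᵀ * (L m * U m) * (U m)⁻¹
        = ((U m)⁻¹)ᵀ * (L m * (U m * (U m)⁻¹)) := by simp only [Matrix.mul_assoc]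
      _ = ((U m)⁻¹)ᵀ * L m := by rw [hUUinv m hm1 hm, Matrix.mul_one]
  -- diagonal of M
  have hMdiag : ∀ m, 1 ≤ m → m ≤ j → ∀ i : Fin m,
      ((P m)ᵀ * A * P m) i i = (uD ((i:ℕ)+1))⁻¹ := by
    intro m hm1 hm i
    rw [hMeq m hm1 hm, Matrix.mul_apply]
    rw [Finset.sum_eq_single_of_mem i (Finset.mem_univ i) (fun q _ hq => by
      by_cases hc : (q:ℕ) = (i:ℕ)+1
      · rw [Matrix.transpose_apply, hUinvtri m hm1 hm q i (by omega)]; ring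
      · rw [hLlow m hm q i (fun h => hq (Fin.ext h)) hc]; ring)]
    rw [Matrix.transpose_apply, hUinvdiag m hm1 hm i, hLdiag m hm i, mul_one]
  -- off-diagonal of M vanishes
  have hMzero : ∀ m, 1 ≤ m → m ≤ j → ∀ i l : Fin m, (i:ℕ) ≠ (l:ℕ) →
      ((P m)ᵀ * A * P m) i l = 0 := by
    intro m hm1 hm
    have hupper : ∀ i l : Fin m, (i:ℕ) < (l:ℕ) → ((P m)ᵀ * A * P m) i l = 0 := by
      intro i l h
      rw [hMeq m hm1 hm, Matrix.mul_apply]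
      refine Finset.sum_eq_zero fun q _ => ?_
      by_cases hc : (q:ℕ) = (l:ℕ) ∨ (q:ℕ) = (l:ℕ)+1
      · rw [Matrix.transpose_apply, hUinvtri m hm1 hm q i (by omega)]; ring
      · push_neg at hc
        rw [hLlow m hm q l hc.1 hc.2]; ring
    intro i l hne
    rcases lt_or_gt_of_ne hne with hlt | hgt
    · exact hupper i l hlt
    · have hherm := (hSPD m hm1 hm).1
      rw [← hherm.apply i l, hupper l i hgt, star_zero]
  -- diagonal entries of M positive, hence pivots positive
  have huDpos : ∀ i, 1 ≤ i → i ≤ j → 0 < uD i := by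
    intro i hi1 hij
    have hj1 : 1 ≤ j := le_trans hi1 hij
    set i0 : Fin j := ⟨i - 1, by omega⟩ with hi0
    have hne : (Pi.single i0 (1:ℝ) : Fin j → ℝ) ≠ 0 := by
      intro hc
      have := congrFun hc i0
      simp at this
    have hpos := (hSPD j hj1 le_rfl).dotProduct_mulVec_pos hne
    have hdot : (star (Pi.single i0 (1:ℝ))) ⬝ᵥ (((P j)ᵀ * A * P j) *ᵥ Pi.single i0 1)
        = ((P j)ᵀ * A * P j) i0 i0 := by
      rw [star_trivial, Matrix.mulVec_single, single_dotProduct]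
      simp
    rw [hdot, hMdiag j hj1 le_rfl i0] at hpos
    have : (i0:ℕ) + 1 = i := by simp only [hi0]; omega
    rw [this] at hpos
    exact inv_pos.mp hpos
  -- sign of ζ
  have hsign : ∀ k, 1 ≤ k → k ≤ j → 0 < (-1:ℝ)^(k-1) * ζ k := by
    intro k hk1
    induction k, hk1 using Nat.le_induction with
    | base => intro _; simpa [hζ1] using hβpos
    | succ k hk ih =>
      intro hkj
      have hkj' : k ≤ j := by omega
      have hz := hζ k hk hkj'
      have hlsv := hls k hk hkj'
      have ht := htpos k hk hkj'
      have hu := huDpos k hk hkj'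
      have ihv := ih hkj'
      have hpow : (-1:ℝ)^k = -(-1:ℝ)^(k-1) := by
        conv_lhs => rw [show k = (k-1)+1 from by omega]
        rw [pow_succ]
        ring
      have hval : (-1:ℝ)^((k+1)-1) * ζ (k+1)
          = (t (k+1) k / uD k) * ((-1:ℝ)^(k-1) * ζ k) := by
        rw [Nat.add_sub_cancel, hz, hlsv, hpow]
        ring
      rw [hval]
      exact mul_pos (div_pos ht hu) ihv
  have hζne : ∀ k, 1 ≤ k → k ≤ j → ζ k ≠ 0 := by
    intro k h1 h2 hc
    have := hsign k h1 h2
    rw [hc, mul_zero] at this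
    exact lt_irrefl 0 this
  have hζabs : ∀ k, 1 ≤ k → k ≤ j → ζ k = (-1:ℝ)^(k-1) * |ζ k| := by
    intro k h1 h2
    have h := hsign k h1 h2
    rcases Nat.even_or_odd (k-1) with he | ho
    · rw [he.neg_one_pow] at h ⊢
      rw [one_mul] at h ⊢
      exact (abs_of_pos h).symm
    · rw [ho.neg_one_pow] at h ⊢
      have hneg : ζ k < 0 := by nlinarith
      rw [abs_of_neg hneg]; ring
  -- iterates as partial sums
  have hxsum : ∀ k, k ≤ j → x k = x 0 + ∑ i ∈ Finset.Icc 1 k, ζ i • p i := by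
    intro k
    induction k with
    | zero => intro _; simp
    | succ k ih =>
      intro hk
      rw [hx (k+1) (by omega) hk, Nat.add_sub_cancel, ih (by omega),
        Finset.sum_Icc_succ_top (by omega), add_assoc]
  -- the main computation
  have main : ∀ m, 1 ≤ m → m ≤ j →
      (A *ᵥ x (m-1) - b) ⬝ᵥ p m = -(ζ m / uD m) := by
    intro m hm1 hm
    set lst : Fin m := ⟨m-1, by omega⟩ with hlst
    -- the p vectors as columns of P m
    have hpm : ∀ i, ∀ _ : 1 ≤ i, ∀ _ : i ≤ m, p i = fun r => P m r ⟨i-1, by omega⟩ := by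
      intro i h1 h2
      obtain ⟨i', rfl⟩ : ∃ i', i = i' + 1 := ⟨i-1, by omega⟩
      exact hpcol m hm1 hm ⟨i', by omega⟩
    -- cross-term orthogonality
    have hcross : ∀ i, 1 ≤ i → i < m → (A *ᵥ p i) ⬝ᵥ p m = 0 := by
      intro i h1 h2
      rw [hpm i h1 (le_of_lt h2), hpm m hm1 le_rfl]
      have hMentry : (A *ᵥ fun r => P m r ⟨i-1, by omega⟩) ⬝ᵥ (fun r => P m r lst)
          = ((P m)ᵀ * A * P m) lst ⟨i-1, by omega⟩ := by
        simp only [Matrix.mul_apply, Matrix.transpose_apply, Matrix.mulVec, dotProduct,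
          Finset.sum_mul, Finset.mul_sum]
        rw [Finset.sum_comm]
        exact Finset.sum_congr rfl fun s _ => Finset.sum_congr rfl fun r _ => by ring
      rw [hMentry, hMzero m hm1 hm lst ⟨i-1, by omega⟩ (by simp only [hlst]; omega)]
    -- v1 dot p m
    have hv1pm : v 1 ⬝ᵥ p m = (U m)⁻¹ ⟨0, hm1⟩ lst := by
      rw [hpm m hm1 le_rfl]
      have hPexp : ∀ r, P m r lst = ∑ q : Fin m, v ((q:ℕ)+1) r * (U m)⁻¹ q lst := by
        intro r
        rw [hP, Matrix.mul_apply]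
        exact Finset.sum_congr rfl fun q _ => by rw [hV]
      simp only [dotProduct]
      calc ∑ r, v 1 r * P m r lst
          = ∑ r, ∑ q : Fin m, v 1 r * (v ((q:ℕ)+1) r * (U m)⁻¹ q lst) := by
            refine Finset.sum_congr rfl fun r _ => ?_
            rw [hPexp r, Finset.mul_sum]
        _ = ∑ q : Fin m, (v 1 ⬝ᵥ v ((q:ℕ)+1)) * (U m)⁻¹ q lst := by
            rw [Finset.sum_comm]
            refine Finset.sum_congr rfl fun q _ => ?_
            simp only [dotProduct, Finset.sum_mul]
            exact Finset.sum_congr rfl fun r _ => by ring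
        _ = (U m)⁻¹ ⟨0, hm1⟩ lst := by
            rw [Finset.sum_eq_single_of_mem ⟨0, hm1⟩ (Finset.mem_univ _) (fun q _ hq => by
              rw [horth 1 ((q:ℕ)+1) (by omega) (by omega) (by omega) (by omega),
                if_neg (fun hc => hq (Fin.ext (show (q:ℕ) = 0 by omega)))]
              ring)]
            have h9 : v 1 ⬝ᵥ v (((⟨0, hm1⟩ : Fin m) : ℕ) + 1) = 1 := by
              rw [horth 1 _ (by omega) (show (0:ℕ)+1 ≤ j+1 by omega)
                (show 1 ≤ (0:ℕ)+1 by omega) (show (0:ℕ)+1 ≤ j+1 by omega), if_pos rfl]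
            rw [h9, one_mul]
    -- the recursion for the last column of U⁻¹
    have hrec : ∀ d, ∀ q : Fin m, m - 1 - (q:ℕ) ≤ d →
        (U m)⁻¹ q lst * ζ ((q:ℕ)+1) = ζ m / uD m := by
      intro d
      induction d with
      | zero =>
        intro q hq
        have hqv : (q:ℕ) = m - 1 := by omega
        have hql : q = lst := Fin.ext (by simp only [hlst]; omega)
        rw [hql, hUinvdiag m hm1 hm lst,
          show ((lst:ℕ)+1) = m from by simp only [hlst]; omega]
        rw [inv_mul_eq_div]
      | succ d ih =>
        intro q hq
        by_cases hql : (q:ℕ) = m - 1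
        · have hql' : q = lst := Fin.ext (by simp only [hlst]; omega)
          rw [hql', hUinvdiag m hm1 hm lst,
            show ((lst:ℕ)+1) = m from by simp only [hlst]; omega]
          rw [inv_mul_eq_div]
        · have hqlt : (q:ℕ) < m - 1 := by omega
          set q' : Fin m := ⟨(q:ℕ)+1, by omega⟩ with hq'
          have hih := ih q' (by simp only [hq']; omega)
          -- entry (q, lst) of U * U⁻¹ = 1
          have hent := congrFun (congrFun (hUUinv m hm1 hm) q) lst
          rw [Matrix.mul_apply, Matrix.one_apply_ne (by
            intro hc
            have := congrArg (fun z : Fin m => (z:ℕ)) hc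
            simp only [hlst] at this
            omega)] at hent
          have hqq' : q ≠ q' := by
            intro hc
            have := congrArg (fun z : Fin m => (z:ℕ)) hc
            simp only [hq'] at this
            omega
          rw [fin_sum_two _ q q' hqq' (fun s hs1 hs2 => by
            rcases lt_or_gt_of_ne (fun hc : (s:ℕ) = (q:ℕ) => hs1 (Fin.ext hc)) with hlt | hgt
            · rw [hUtri m hm q s hlt]; ring
            · have : (q:ℕ)+1 < (s:ℕ) := by
                rcases Nat.lt_or_ge ((q:ℕ)+1) (s:ℕ) with h | h
                · exact h
                · exfalso; exact hs2 (Fin.ext (by simp only [hq']; omega))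
              rw [hUbid m hm1 hm q s this]; ring)] at hent
          rw [huD m hm q, hUsup m hm1 hm q q' (by simp only [hq'])] at hent
          -- hent : uD (q+1) * U⁻¹ q lst + t (q+2) (q+1) * U⁻¹ q' lst = 0
          have hq1 : 1 ≤ (q:ℕ)+1 := by omega
          have hq1j : (q:ℕ)+1 ≤ j := by omega
          have hzrec := hζ ((q:ℕ)+1) hq1 hq1j
          have hlsv := hls ((q:ℕ)+1) hq1 hq1j
          have hupos := huDpos ((q:ℕ)+1) hq1 hq1j
          have htq := htpos ((q:ℕ)+1) hq1 hq1j
          have hune : uD ((q:ℕ)+1) ≠ 0 := ne_of_gt hupos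
          have hih' : (U m)⁻¹ q' lst * ζ ((q:ℕ)+1+1) = ζ m / uD m := hih
          have hent' : uD ((q:ℕ)+1) * (U m)⁻¹ q lst
              + t ((q:ℕ)+1+1) ((q:ℕ)+1) * (U m)⁻¹ q' lst = 0 := hent
          have hua : uD ((q:ℕ)+1) * (U m)⁻¹ q lst
              = -(t ((q:ℕ)+1+1) ((q:ℕ)+1) * (U m)⁻¹ q' lst) := by linarith
          rw [← hih', hzrec, hlsv]
          apply mul_right_cancel₀ hune
          calc (U m)⁻¹ q lst * ζ ((q:ℕ)+1) * uD ((q:ℕ)+1)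
              = (uD ((q:ℕ)+1) * (U m)⁻¹ q lst) * ζ ((q:ℕ)+1) := by ring
            _ = -(t ((q:ℕ)+1+1) ((q:ℕ)+1) * (U m)⁻¹ q' lst) * ζ ((q:ℕ)+1) := by
                rw [hua]
            _ = (U m)⁻¹ q' lst * (-(t ((q:ℕ)+1+1) ((q:ℕ)+1) / uD ((q:ℕ)+1)) * ζ ((q:ℕ)+1))
                * uD ((q:ℕ)+1) := by
                field_simp
                all_goals (try ring)
                all_goals simp
    -- assemble
    have hx' : x (m-1) = x 0 + ∑ i ∈ Finset.Icc 1 (m-1), ζ i • p i := hxsum (m-1) (by omega)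
    have hg : A *ᵥ x (m-1) - b
        = -(β • v 1) + ∑ i ∈ Finset.Icc 1 (m-1), ζ i • (A *ᵥ p i) := by
      rw [hx', hx0, Matrix.mulVec_add, mulVec_sum']
      have h5 : A *ᵥ x0 - b = -(β • v 1) := by rw [hβv, neg_sub]
      have h6 : ∀ i ∈ Finset.Icc 1 (m-1), A *ᵥ (ζ i • p i) = ζ i • (A *ᵥ p i) :=
        fun i _ => Matrix.mulVec_smul A (ζ i) (p i)
      rw [Finset.sum_congr rfl h6]
      ext r
      simp only [Pi.add_apply, Pi.sub_apply, Pi.neg_apply, Pi.smul_apply, smul_eq_mul]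
      have := congrFun h5 r
      simp only [Pi.sub_apply, Pi.neg_apply, Pi.smul_apply, smul_eq_mul] at this
      linarith
    rw [hg, add_dotProduct, neg_dotProduct, smul_dotProduct, sum_dotProduct']
    have hzero : ∑ i ∈ Finset.Icc 1 (m-1), (ζ i • (A *ᵥ p i)) ⬝ᵥ p m = 0 := by
      refine Finset.sum_eq_zero fun i hi => ?_
      rw [Finset.mem_Icc] at hi
      rw [smul_dotProduct, hcross i hi.1 (by omega), smul_zero]
    rw [hzero, add_zero, hv1pm]
    have h0rec := hrec (m-1) ⟨0, hm1⟩ (show m - 1 - 0 ≤ m - 1 by omega)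
    simp only [hζ1] at h0rec
    -- h0rec : U⁻¹ 0 lst * β = ζ m / uD m
    have : (β:ℝ) • (U m)⁻¹ ⟨0, by omega⟩ lst = ζ m / uD m := by
      rw [smul_eq_mul, mul_comm]
      exact h0rec
    rw [smul_eq_mul] at this ⊢
    linarith
  refine ⟨?_, ?_, ?_⟩
  · intro hj
    have h := main 1 le_rfl hj
    simpa [hζ1, neg_div] using h
  · intro k hk hk1
    have h := main (k+1) (by omega) hk1
    rw [Nat.add_sub_cancel] at h
    rw [h]
    have hkj : k ≤ j := by omega
    have hz := hζ k hk hkj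
    have hlsv := hls k hk hkj
    have habs := hζabs k hk hkj
    have hu1 := huDpos k hk hkj
    have hu2 := huDpos (k+1) (by omega) hk1
    rw [hz, hlsv]
    set az := |ζ k| with haz
    rw [habs]
    have h1ne : uD k ≠ 0 := ne_of_gt hu1
    have h2ne : uD (k+1) ≠ 0 := ne_of_gt hu2
    field_simp
  · intro k hk hk1 hodd
    have h := main (k+1) (by omega) hk1
    rw [Nat.add_sub_cancel] at h
    rw [h]
    have hkj : k ≤ j := by omega
    have hz := hζ k hk hkj
    have hlsv := hls k hk hkj
    have hu1 := huDpos k hk hkj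
    have hu2 := huDpos (k+1) (by omega) hk1
    have ht := htpos k hk hkj
    have hzsgn := hsign k hk hkj
    have heven : Even (k-1) := Nat.Odd.sub_odd hodd odd_one
    rw [heven.neg_one_pow, one_mul] at hzsgn
    -- ζ k > 0, so ζ (k+1) < 0
    rw [hz, hlsv]
    have : -(-(t (k+1) k / uD k) * ζ k / uD (k+1)) = (t (k+1) k / uD k) * ζ k / uD (k+1) := by
      ring
    rw [this]
    positivity
end

section
/- Let A = Aᵀ ∈ ℝ^{n×n}, run CG (PCG with H₀ = I) and DIOM on Ax = b from the same x₀, and suppose P_kᵀAP_k is symmetric positive definite for k = 1,…,j. Then for k = 0,…,j−1, the CG direction and step length satisfy d_k^{CG} = ζ_{k+1} u_{k+1,k+1} p_{k+1} and α_k^{CG} = 1/u_{k+1,k+1}, where p_{k+1}, ζ_{k+1} are the DIOM direction and solution coefficient and u_{k+1,k+1} is the (k+1)-st LU pivot of the Lanczos tridiagonal matrix. In particular, negative curvature in CG (α_k^{CG} < 0) corresponds exactly to a negative pivot u_{k+1,k+1} < 0 in DIOM. -/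
open Matrix

/-- Running CG and DIOM on the same SPD-curvature problem
(`P_kᵀ A P_k ≻ 0` for `k = 1,…,j`), the CG direction and step length are recovered from
the DIOM quantities: `d_k^{CG} = ζ_{k+1} u_{k+1,k+1} p_{k+1}` and
`α_k^{CG} = 1/u_{k+1,k+1}`; in particular negative curvature in CG corresponds exactly
to a negative pivot in DIOM. -/
theorem cg_from_diom
    (n : ℕ) (A : Matrix (Fin n) (Fin n) ℝ) (hA : A.IsSymm)
    (b x0 : Fin n → ℝ) (j : ℕ)
    (β : ℝ) (hβ : β = Real.sqrt ((b - A *ᵥ x0) ⬝ᵥ (b - A *ᵥ x0)))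
    (hr0 : b - A *ᵥ x0 ≠ 0)
    -- Lanczos process (vectors indexed from 1)
    (v : ℕ → Fin n → ℝ) (t : ℕ → ℕ → ℝ)
    (hv1 : v 1 = β⁻¹ • (b - A *ᵥ x0))
    (horth : ∀ i l, 1 ≤ i → i ≤ j + 1 → 1 ≤ l → l ≤ j + 1 →
      v i ⬝ᵥ v l = if i = l then 1 else 0)
    (harn : ∀ k, 1 ≤ k → k ≤ j →
      A *ᵥ v k = (∑ i ∈ Finset.Icc 1 k, t i k • v i) + t (k+1) k • v (k+1))
    (htpos : ∀ k, 1 ≤ k → k ≤ j → 0 < t (k+1) k)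
    (V : (k : ℕ) → Matrix (Fin n) (Fin k) ℝ)
    (hV : ∀ k, ∀ (r : Fin n) (c : Fin k), V k r c = v ((c : ℕ) + 1) r)
    (T : (k : ℕ) → Matrix (Fin k) (Fin k) ℝ)
    (hT : ∀ k, T k = (V k)ᵀ * A * V k)
    -- LU factorization T_k = L_k U_k
    (L U : (k : ℕ) → Matrix (Fin k) (Fin k) ℝ)
    (hLU : ∀ k, 1 ≤ k → k ≤ j → T k = L k * U k)
    (hLdiag : ∀ k, k ≤ j → ∀ i : Fin k, L k i i = 1)
    (hLlow : ∀ k, k ≤ j → ∀ i l : Fin k,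
      (i : ℕ) ≠ (l : ℕ) → (i : ℕ) ≠ (l : ℕ) + 1 → L k i l = 0)
    (hUtri : ∀ k, k ≤ j → ∀ i l : Fin k, (l : ℕ) < (i : ℕ) → U k i l = 0)
    -- pivots and subdiagonal multipliers as scalar sequences
    (uD : ℕ → ℝ)
    (huD : ∀ k, k ≤ j → ∀ i : Fin k, U k i i = uD ((i : ℕ) + 1))
    (ℓs : ℕ → ℝ)
    (hls : ∀ k, 1 ≤ k → k ≤ j → ℓs (k+1) = t (k+1) k / uD k)
    -- solution coefficients ζ_k
    (ζ : ℕ → ℝ) (hζ1 : ζ 1 = β)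
    (hζ : ∀ k, 1 ≤ k → k ≤ j → ζ (k+1) = -ℓs (k+1) * ζ k)
    -- P_k = V_k U_k⁻¹ with P_kᵀ A P_k symmetric positive definite
    (P : (k : ℕ) → Matrix (Fin n) (Fin k) ℝ)
    (hP : ∀ k, P k = V k * (U k)⁻¹)
    (hSPD : ∀ k, 1 ≤ k → k ≤ j → ((P k)ᵀ * A * P k).PosDef)
    -- the DIOM direction vectors p_k (columns of P_k) and iterates
    (p : ℕ → Fin n → ℝ)
    (hpcol : ∀ k, 1 ≤ k → k ≤ j → ∀ c : Fin k, p ((c : ℕ) + 1) = fun r => P k r c)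
    (xD : ℕ → Fin n → ℝ)
    (hxD0 : xD 0 = x0)
    (hxD : ∀ k, 1 ≤ k → k ≤ j → xD k = xD (k - 1) + ζ k • p k)
    -- CG (PCG with H₀ = I) from the same starting point
    (xC dC gC : ℕ → Fin n → ℝ) (αC : ℕ → ℝ)
    (hgC : ∀ k, gC k = A *ᵥ xC k - b)
    (hxC0 : xC 0 = x0)
    (hdC0 : dC 0 = -gC 0)
    (hαC : ∀ k, αC k = (gC k ⬝ᵥ gC k) / (dC k ⬝ᵥ (A *ᵥ dC k)))
    (hdC : ∀ k, dC (k+1) = -gC (k+1) + ((gC (k+1) ⬝ᵥ gC (k+1)) / (gC k ⬝ᵥ gC k)) • dC k)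
    (hxC : ∀ k, xC (k+1) = xC k + αC k • dC k) :
    ∀ k, k + 1 ≤ j →
      dC k = (ζ (k+1) * uD (k+1)) • p (k+1) ∧
      αC k = 1 / uD (k+1) ∧
      (αC k < 0 ↔ uD (k+1) < 0) := by
  intro k hkj
  have hj1 : 1 ≤ j := le_trans (by omega) hkj
  have hj0 : 0 < j := hj1
  -- β is positive
  have hrr : 0 < (b - A *ᵥ x0) ⬝ᵥ (b - A *ᵥ x0) := by
    rcases lt_or_eq_of_le (Finset.sum_nonneg fun i _ => mul_self_nonneg _ :
      0 ≤ (b - A *ᵥ x0) ⬝ᵥ (b - A *ᵥ x0)) with h | h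
    · exact h
    · exact absurd ((dotProduct_self_eq_zero).1 h.symm) hr0
  have hβpos : 0 < β := by rw [hβ]; exact Real.sqrt_pos.2 hrr
  have hβne : β ≠ 0 := ne_of_gt hβpos
  have hr0v : b - A *ᵥ x0 = β • v 1 := by
    rw [hv1, smul_smul, mul_inv_cancel₀ hβne, one_smul]
  -- symmetry of the bilinear form
  have hdotsym : ∀ x y : Fin n → ℝ, x ⬝ᵥ (A *ᵥ y) = y ⬝ᵥ (A *ᵥ x) := by
    intro x y
    rw [dotProduct_mulVec, ← Matrix.mulVec_transpose, hA.eq, dotProduct_comm]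
  have dps : ∀ (s : Finset ℕ) (f : ℕ → Fin n → ℝ) (x : Fin n → ℝ),
      x ⬝ᵥ (∑ m ∈ s, f m) = ∑ m ∈ s, x ⬝ᵥ f m := by
    intro s f x
    simp only [dotProduct, Finset.sum_apply, Finset.mul_sum]
    exact Finset.sum_comm
  -- dot products with A-images of Lanczos vectors
  have hAvdot : ∀ i l, 1 ≤ i → i ≤ j+1 → 1 ≤ l → l ≤ j →
      v i ⬝ᵥ (A *ᵥ v l) = if i ≤ l+1 then t i l else 0 := by
    intro i l hi1 hi2 hl1 hl2
    rw [harn l hl1 hl2, dotProduct_add, dotProduct_smul,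
      horth i (l+1) hi1 hi2 (by omega) (by omega), dps]
    have hsum : ∀ m ∈ Finset.Icc 1 l, v i ⬝ᵥ t m l • v m = if i = m then t m l else 0 := by
      intro m hm
      rw [Finset.mem_Icc] at hm
      rw [dotProduct_smul, horth i m hi1 hi2 (by omega) (by omega)]
      simp [smul_eq_mul, mul_ite]
    rw [Finset.sum_congr rfl hsum, Finset.sum_ite_eq (Finset.Icc 1 l) i (fun m => t m l)]
    simp only [Finset.mem_Icc, smul_eq_mul, mul_ite, mul_one, mul_zero]
    by_cases h1 : i ≤ l
    · rw [if_pos ⟨hi1, h1⟩, if_neg (by omega), if_pos (by omega), add_zero]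
    · by_cases h2 : i = l + 1
      · rw [if_neg (by omega), if_pos h2, if_pos (by omega), zero_add, h2]
      · rw [if_neg (by omega), if_neg h2, if_neg (by omega), add_zero]
  have tsym : ∀ q, 1 ≤ q → q+1 ≤ j → t q (q+1) = t (q+1) q := by
    intro q h1 h2
    have e1 := hAvdot q (q+1) h1 (by omega) (by omega) h2
    have e2 := hAvdot (q+1) q (by omega) (by omega) h1 (by omega)
    rw [if_pos (by omega)] at e1
    rw [if_pos (by omega)] at e2
    rw [← e1, ← e2, hdotsym]
  have tzero : ∀ q l, 1 ≤ q → q+1 < l → l ≤ j → t q l = 0 := by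
    intro q l h1 h2 h3
    have e1 := hAvdot q l h1 (by omega) (by omega) h3
    have e2 := hAvdot l q (by omega) (by omega) h1 (by omega)
    rw [if_pos (by omega)] at e1
    rw [if_neg (by omega)] at e2
    rw [← e1, hdotsym, e2]
  -- three-term Arnoldi relations
  have harn1 : A *ᵥ v 1 = t 1 1 • v 1 + t 2 1 • v 2 := by
    have := harn 1 le_rfl hj1
    simpa using this
  have harn3 : ∀ q, 1 ≤ q → q+1 ≤ j →
      A *ᵥ v (q+1) = t q (q+1) • v q + t (q+1) (q+1) • v (q+1) + t (q+2) (q+1) • v (q+2) := by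
    rintro ⟨⟩ hq1 hq2
    · omega
    rename_i q'
    rw [harn (q'+2) (by omega) (by omega),
      Finset.sum_Icc_succ_top (by omega : 1 ≤ q'+2),
      Finset.sum_Icc_succ_top (by omega : 1 ≤ q'+1)]
    have hz : ∑ m ∈ Finset.Icc 1 q', t m (q'+2) • v m = 0 := by
      apply Finset.sum_eq_zero
      intro m hm
      rw [Finset.mem_Icc] at hm
      rw [tzero m (q'+2) (by omega) (by omega) (by omega), zero_smul]
    rw [hz, zero_add]
  -- entries of X^T A X matrices
  have entry : ∀ (X : Matrix (Fin n) (Fin j) ℝ) (i l : Fin j),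
      (Xᵀ * A * X) i l = (fun r => X r i) ⬝ᵥ (A *ᵥ fun r => X r l) := by
    intro X i l
    rw [Matrix.mul_assoc, Matrix.mul_apply]
    simp only [Matrix.transpose_apply, Matrix.mul_apply, dotProduct, Matrix.mulVec, dotProduct]
  have Tval : ∀ i l : Fin j, T j i l = if (i:ℕ) ≤ (l:ℕ)+1 then t ((i:ℕ)+1) ((l:ℕ)+1) else 0 := by
    intro i l
    rw [hT, entry (V j) i l]
    have h1 : (fun r => V j r i) = v ((i:ℕ)+1) := by funext r; rw [hV]
    have h2 : (fun r => V j r l) = v ((l:ℕ)+1) := by funext r; rw [hV]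
    rw [h1, h2, hAvdot ((i:ℕ)+1) ((l:ℕ)+1) (by omega) (by omega) (by omega) (by omega)]
    simp only [Nat.add_le_add_iff_right]
  have Tsym : ∀ i l : Fin j, T j i l = T j l i := by
    intro i l
    conv_lhs => rw [hT]
    conv_rhs => rw [hT]
    rw [entry, entry, hdotsym]
  have Tzero' : ∀ i l : Fin j, (i:ℕ)+1 < (l:ℕ) → T j i l = 0 := by
    intro i l h
    rw [Tsym, Tval, if_neg (by omega)]
  -- invertibility of U j
  have hUdet : IsUnit (U j).det := by
    by_contra h
    have h0 : (U j)⁻¹ = 0 := Matrix.nonsing_inv_apply_not_isUnit _ h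
    have hP0 : P j = 0 := by rw [hP, h0, Matrix.mul_zero]
    have hpd := hSPD j hj1 le_rfl
    rw [hP0] at hpd
    have hx : (fun _ : Fin j => (1:ℝ)) ≠ 0 := by
      intro hx
      exact one_ne_zero (congrFun hx ⟨0, hj0⟩)
    have h2 := hpd.dotProduct_mulVec_pos hx
    simp [Matrix.zero_mul, Matrix.mul_zero] at h2
  have hdet : (U j).det = ∏ c : Fin j, uD ((c:ℕ)+1) := by
    rw [Matrix.det_of_upperTriangular (fun i l h => hUtri j le_rfl i l (by exact_mod_cast h))]
    exact Finset.prod_congr rfl fun c _ => huD j le_rfl c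
  have huDne : ∀ m, m < j → uD (m+1) ≠ 0 := by
    intro m hm hcontra
    have : (U j).det = 0 := by
      rw [hdet]
      exact Finset.prod_eq_zero (Finset.mem_univ ⟨m, hm⟩) hcontra
    exact hUdet.ne_zero this
  haveI : Invertible (U j) := (U j).invertibleOfIsUnitDet hUdet
  have hUinvTri : ∀ q c : Fin j, (c:ℕ) < (q:ℕ) → (U j)⁻¹ q c = 0 := by
    have hbt : (U j).BlockTriangular (fun i : Fin j => (i:ℕ)) :=
      fun i l h => hUtri j le_rfl i l h
    exact fun q c h => Matrix.blockTriangular_inv_of_blockTriangular hbt h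
  have hUinvDiag : ∀ c : Fin j, (U j)⁻¹ c c = (uD ((c:ℕ)+1))⁻¹ := by
    intro c
    have h1 : (U j * (U j)⁻¹) c c = 1 := by
      rw [Matrix.mul_nonsing_inv _ hUdet, Matrix.one_apply_eq]
    rw [Matrix.mul_apply, Finset.sum_eq_single c] at h1
    · rw [huD j le_rfl c] at h1
      exact (inv_eq_of_mul_eq_one_right h1).symm
    · intro q _ hq
      rcases lt_or_gt_of_ne (fun h => hq (Fin.ext h) : (q:ℕ) ≠ (c:ℕ)) with h | h
      · rw [hUtri j le_rfl c q h, zero_mul]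
      · rw [hUinvTri q c h, mul_zero]
    · intro h; exact absurd (Finset.mem_univ _) h
  have hPU : P j * U j = V j := by
    rw [hP]; exact Matrix.nonsing_inv_mul_cancel_right _ _ hUdet
  have hpj : ∀ c : Fin j, p ((c:ℕ)+1) = fun r => P j r c := hpcol j hj1 le_rfl
  have hpsum : ∀ c : Fin j, p ((c:ℕ)+1) = fun r => ∑ q : Fin j, (U j)⁻¹ q c * v ((q:ℕ)+1) r := by
    intro c
    rw [hpj c]
    funext r
    rw [hP, Matrix.mul_apply]
    exact Finset.sum_congr rfl fun q _ => by rw [hV]; ring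
  have hvp : ∀ (c : Fin j) (l : ℕ), 1 ≤ l → l ≤ j+1 → v l ⬝ᵥ p ((c:ℕ)+1) =
      ∑ q : Fin j, (U j)⁻¹ q c * (if l = (q:ℕ)+1 then 1 else 0) := by
    intro c l h1 h2
    rw [hpsum c]
    have e1 : v l ⬝ᵥ (fun r => ∑ q : Fin j, (U j)⁻¹ q c * v ((q:ℕ)+1) r)
        = ∑ q : Fin j, (U j)⁻¹ q c * (v l ⬝ᵥ v ((q:ℕ)+1)) := by
      simp only [dotProduct, Finset.mul_sum]
      rw [Finset.sum_comm]
      exact Finset.sum_congr rfl fun q _ => Finset.sum_congr rfl fun r _ => by ring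
    rw [e1]
    exact Finset.sum_congr rfl fun q _ => by
      rw [horth l ((q:ℕ)+1) h1 h2 (by omega) (by have := q.isLt; omega)]
  have hpv : ∀ (c : Fin j) (l : ℕ) (h1 : 1 ≤ l) (hl : l ≤ j) (hlf : l - 1 < j),
      v l ⬝ᵥ p ((c:ℕ)+1) = (U j)⁻¹ ⟨l-1, hlf⟩ c := by
    intro c l h1 hl hlf
    rw [hvp c l h1 (by omega), Finset.sum_eq_single (⟨l-1, hlf⟩ : Fin j)]
    · rw [if_pos (by simp; omega), mul_one]
    · intro q _ hq
      rw [if_neg, mul_zero]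
      intro h
      exact hq (Fin.ext (by simp; omega))
    · intro h; exact absurd (Finset.mem_univ _) h
  have hpvtop : ∀ c : Fin j, v (j+1) ⬝ᵥ p ((c:ℕ)+1) = 0 := by
    intro c
    rw [hvp c (j+1) (by omega) le_rfl]
    apply Finset.sum_eq_zero
    intro q _
    rw [if_neg (by have := q.isLt; omega), mul_zero]
  -- row expansions of T = L * U
  have hrow0 : ∀ c : Fin j, T j ⟨0, hj0⟩ c = U j ⟨0, hj0⟩ c := by
    intro c
    rw [hLU j hj1 le_rfl, Matrix.mul_apply, Finset.sum_eq_single (⟨0, hj0⟩ : Fin j)]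
    · rw [hLdiag j le_rfl, one_mul]
    · intro q _ hq
      have hq' : (q:ℕ) ≠ 0 := fun h => hq (Fin.ext h)
      rw [hLlow j le_rfl _ q (by show (0:ℕ) ≠ (q:ℕ); omega) (by show (0:ℕ) ≠ (q:ℕ)+1; omega),
        zero_mul]
    · intro h; exact absurd (Finset.mem_univ _) h
  have hrows : ∀ (m : ℕ) (hm : m+1 < j) (c : Fin j),
      T j ⟨m+1, hm⟩ c = L j ⟨m+1, hm⟩ ⟨m, by omega⟩ * U j ⟨m, by omega⟩ c
        + U j ⟨m+1, hm⟩ c := by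
    intro m hm c
    rw [hLU j hj1 le_rfl, Matrix.mul_apply,
      ← Finset.sum_subset (Finset.subset_univ {(⟨m, by omega⟩ : Fin j), ⟨m+1, hm⟩})
        (by
          intro q _ hq
          simp only [Finset.mem_insert, Finset.mem_singleton] at hq
          push_neg at hq
          have h1 : (q:ℕ) ≠ m := fun h => hq.1 (Fin.ext h)
          have h2 : (q:ℕ) ≠ m+1 := fun h => hq.2 (Fin.ext h)
          rw [hLlow j le_rfl _ q (by show m+1 ≠ (q:ℕ); omega) (by show m+1 ≠ (q:ℕ)+1; omega),
            zero_mul]),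
      Finset.sum_pair (by intro h; rw [Fin.mk.injEq] at h; omega)]
    rw [hLdiag j le_rfl, one_mul]
  -- U is upper bidiagonal
  have hUzeroN : ∀ N (m c : Fin j), (m:ℕ) = N → (m:ℕ)+1 < (c:ℕ) → U j m c = 0 := by
    intro N
    induction N with
    | zero =>
      intro m c hm hc
      have hm0 : m = ⟨0, hj0⟩ := Fin.ext hm
      calc U j m c = U j ⟨0, hj0⟩ c := by rw [hm0]
        _ = T j ⟨0, hj0⟩ c := (hrow0 c).symm
        _ = 0 := Tzero' _ _ (by simp; omega)
    | succ N ih =>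
      intro m c hm hc
      have hmlt : N+1 < j := hm ▸ m.isLt
      have hm0 : m = ⟨N+1, hmlt⟩ := Fin.ext hm
      have hrec := hrows N hmlt c
      rw [ih ⟨N, by omega⟩ c (by simp) (by simp; omega), mul_zero, zero_add,
        Tzero' _ _ (by simp; omega)] at hrec
      rw [hm0, ← hrec]
  have hUzero : ∀ (m c : Fin j), (m:ℕ)+1 < (c:ℕ) → U j m c = 0 :=
    fun m c h => hUzeroN (m:ℕ) m c rfl h
  have hUsuper : ∀ (m : ℕ) (hm : m+1 < j),
      U j ⟨m, by omega⟩ ⟨m+1, hm⟩ = t (m+1) (m+2) := by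
    intro m hm
    cases m with
    | zero =>
      rw [← hrow0 ⟨1, hm⟩, Tval, if_pos (by simp)]
    | succ N =>
      have h := hrows N (by omega) ⟨N+2, hm⟩
      rw [hUzero ⟨N, by omega⟩ ⟨N+2, hm⟩ (by simp), mul_zero, zero_add] at h
      rw [← h, Tval, if_pos (by show N+1 ≤ N+2+1; omega)]
  have huD1 : uD 1 = t 1 1 := by
    have h := hrow0 ⟨0, hj0⟩
    rw [Tval, if_pos (by simp), huD j le_rfl] at h
    simpa using h.symm
  have hLsub : ∀ (m : ℕ) (hm : m+1 < j),
      L j ⟨m+1, hm⟩ ⟨m, by omega⟩ = ℓs (m+2) := by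
    intro m hm
    have h := hrows m hm ⟨m, by omega⟩
    rw [hUtri j le_rfl ⟨m+1, hm⟩ ⟨m, by omega⟩ (by show (m:ℕ) < m+1; omega), add_zero,
      huD j le_rfl, Tval, if_pos (by show m+1 ≤ m+1; omega)] at h
    -- h : t (m+2) (m+1) = L j ⟨m+1,hm⟩ ⟨m,_⟩ * uD (m+1)
    rw [hls (m+1) (by omega) (by omega), eq_div_iff (huDne m (by omega))]
    linarith [h]
  have huDrec : ∀ (m : ℕ) (hm : m+1 < j),
      uD (m+2) = t (m+2) (m+2) - ℓs (m+2) * t (m+1) (m+2) := by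
    intro m hm
    have h := hrows m hm ⟨m+1, hm⟩
    rw [hLsub m hm, hUsuper m hm, huD j le_rfl, Tval,
      if_pos (by show m+1 ≤ m+1+1; omega)] at h
    -- h : t (m+2) (m+2) = ℓs (m+2) * t (m+1) (m+2) + uD (m+2)
    linarith [h]
  -- column relations V = P * U
  have hvrec0 : v 1 = uD 1 • p 1 := by
    funext r
    have h : (P j * U j) r ⟨0, hj0⟩ = V j r ⟨0, hj0⟩ := by rw [hPU]
    rw [Matrix.mul_apply, Finset.sum_eq_single (⟨0, hj0⟩ : Fin j)] at h
    · rw [hV, huD j le_rfl] at h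
      have hp1 : p 1 = fun r => P j r ⟨0, hj0⟩ := hpj ⟨0, hj0⟩
      rw [Pi.smul_apply, smul_eq_mul, hp1]
      rw [← h]; ring
    · intro q _ hq
      have hq' : (q:ℕ) ≠ 0 := fun h => hq (Fin.ext h)
      rw [hUtri j le_rfl q ⟨0, hj0⟩ (by show 0 < (q:ℕ); omega), mul_zero]
    · intro h; exact absurd (Finset.mem_univ _) h
  have hvrec : ∀ (m : ℕ) (hm : m+1 < j),
      v (m+2) = t (m+2) (m+1) • p (m+1) + uD (m+2) • p (m+2) := by
    intro m hm
    funext r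
    have h : (P j * U j) r ⟨m+1, hm⟩ = V j r ⟨m+1, hm⟩ := by rw [hPU]
    rw [Matrix.mul_apply,
      ← Finset.sum_subset (Finset.subset_univ {(⟨m, by omega⟩ : Fin j), ⟨m+1, hm⟩})
        (by
          intro q _ hq
          simp only [Finset.mem_insert, Finset.mem_singleton] at hq
          push_neg at hq
          have h1 : (q:ℕ) ≠ m := fun h => hq.1 (Fin.ext h)
          have h2 : (q:ℕ) ≠ m+1 := fun h => hq.2 (Fin.ext h)
          rcases lt_or_gt_of_ne h2 with hlt | hgt
          · rw [hUzero q ⟨m+1, hm⟩ (by show (q:ℕ)+1 < m+1; omega), mul_zero]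
          · rw [hUtri j le_rfl q ⟨m+1, hm⟩ (by show m+1 < (q:ℕ); omega), mul_zero]),
      Finset.sum_pair (by intro hcon; rw [Fin.mk.injEq] at hcon; omega),
      hUsuper m hm, huD j le_rfl, hV] at h
    have hp1 : p (m+1) = fun r => P j r ⟨m, by omega⟩ := hpj ⟨m, by omega⟩
    have hp2 : p (m+2) = fun r => P j r ⟨m+1, hm⟩ := hpj ⟨m+1, hm⟩
    rw [tsym (m+1) (by omega) (by omega)] at h
    simp only [Pi.add_apply, Pi.smul_apply, smul_eq_mul, hp1, hp2]
    rw [← h]; ring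
  -- action of A on the DIOM directions
  have hApA : ∀ (m : ℕ), m < j → A *ᵥ p (m+1) = v (m+1) + ℓs (m+2) • v (m+2) := by
    intro m
    induction m with
    | zero =>
      intro hm
      have hu1 : uD 1 ≠ 0 := huDne 0 hj0
      have hp1 : p 1 = (uD 1)⁻¹ • v 1 := by
        rw [hvrec0, smul_smul, inv_mul_cancel₀ hu1, one_smul]
      rw [hp1, Matrix.mulVec_smul, harn1]
      funext r
      simp only [Pi.add_apply, Pi.smul_apply, smul_eq_mul, huD1,
        hls 1 le_rfl hj1, huD1]
      have h11 : t 1 1 ≠ 0 := huD1 ▸ huDne 0 hj0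
      field_simp
    | succ N ih =>
      intro hm
      have hu2 : uD (N+2) ≠ 0 := huDne (N+1) hm
      have hv2 : uD (N+2) • p (N+2) = v (N+2) - t (N+2) (N+1) • p (N+1) := by
        rw [hvrec N hm]; abel
    -- multiply the goal by uD (N+2)
      apply smul_right_injective (Fin n → ℝ) hu2
      show uD (N+2) • (A *ᵥ p (N+2)) = uD (N+2) • (v (N+2) + ℓs (N+3) • v (N+3))
      rw [← Matrix.mulVec_smul, hv2, Matrix.mulVec_sub, Matrix.mulVec_smul,
        ih (by omega), harn3 (N+1) (by omega) (by omega)]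
      funext r
      simp only [Pi.add_apply, Pi.sub_apply, Pi.smul_apply, smul_eq_mul]
      have e1 : ℓs (N+3) = t (N+3) (N+2) / uD (N+2) := hls (N+2) (by omega) (by omega)
      have e2 : uD (N+2) = t (N+2) (N+2) - ℓs (N+2) * t (N+1) (N+2) := huDrec N hm
      have e3 : t (N+1) (N+2) = t (N+2) (N+1) := tsym (N+1) (by omega) (by omega)
      simp only [show N+1+1 = N+2 from rfl, show N+1+2 = N+3 from rfl]
      rw [e3] at e2 ⊢
      rw [e1, e2]
      rw [e2] at hu2
      have key : (t (N+2) (N+2) - ℓs (N+2) * t (N+2) (N+1)) *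
          (t (N+3) (N+2) / (t (N+2) (N+2) - ℓs (N+2) * t (N+2) (N+1))) = t (N+3) (N+2) := by
        field_simp
      linear_combination (-v (N+3) r) * key
  -- dot products of p with v
  have hpvd : ∀ (m : ℕ) (hm : m < j), p (m+1) ⬝ᵥ v (m+1) = (uD (m+1))⁻¹ := by
    intro m hm
    rw [dotProduct_comm]
    have h := hpv ⟨m, hm⟩ (m+1) (by omega) (by omega) (by omega)
    rw [h, show (⟨m+1-1, by omega⟩ : Fin j) = ⟨m, hm⟩ from Fin.ext (by simp), hUinvDiag]
  have hpvn : ∀ (m : ℕ) (hm : m < j), p (m+1) ⬝ᵥ v (m+2) = 0 := by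
    intro m hm
    rw [dotProduct_comm]
    by_cases h2 : m+2 ≤ j
    · have h := hpv ⟨m, hm⟩ (m+2) (by omega) h2 (by omega)
      rw [h]
      exact hUinvTri ⟨m+2-1, by omega⟩ ⟨m, hm⟩ (by show (m:ℕ) < m+2-1; omega)
    · rw [show m+2 = j+1 from by omega]
      exact hpvtop ⟨m, hm⟩
  have hpAp : ∀ (m : ℕ) (hm : m < j), p (m+1) ⬝ᵥ (A *ᵥ p (m+1)) = (uD (m+1))⁻¹ := by
    intro m hm
    rw [hApA m hm, dotProduct_add, dotProduct_smul, hpvd m hm, hpvn m hm, smul_zero,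
      add_zero]
  -- positivity of the pivots
  have huDpos : ∀ (m : ℕ), m < j → 0 < uD (m+1) := by
    intro m hm
    have hpd := hSPD j hj1 le_rfl
    have hx : (Pi.single (⟨m, hm⟩ : Fin j) (1:ℝ) : Fin j → ℝ) ≠ 0 := by
      intro h
      have h' := congrFun h ⟨m, hm⟩
      rw [Pi.single_eq_same] at h'
      exact one_ne_zero h'
    have h2 := hpd.dotProduct_mulVec_pos hx
    rw [star_trivial] at h2
    have h3 : Pi.single (⟨m, hm⟩ : Fin j) (1:ℝ) ⬝ᵥ
        (((P j)ᵀ * A * P j) *ᵥ Pi.single ⟨m, hm⟩ 1)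
        = ((P j)ᵀ * A * P j) ⟨m, hm⟩ ⟨m, hm⟩ := by
      rw [single_dotProduct, Matrix.mulVec_single]
      simp
    rw [h3, entry (P j), ← hpj ⟨m, hm⟩] at h2
    rw [hpAp m hm] at h2
    exact inv_pos.1 h2
  -- ζ never vanishes
  have hζn : ∀ m, m ≤ j → ζ (m+1) ≠ 0 := by
    intro m
    induction m with
    | zero => intro _; rw [hζ1]; exact hβne
    | succ N ih =>
      intro hN
      rw [hζ (N+1) (by omega) (by omega)]
      apply mul_ne_zero
      · rw [neg_ne_zero, hls (N+1) (by omega) (by omega)]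
        exact div_ne_zero (ne_of_gt (htpos (N+1) (by omega) (by omega)))
          (huDne N (by omega))
      · exact ih (by omega)
  -- norms of Lanczos vectors
  have hvv1 : ∀ m, 1 ≤ m → m ≤ j+1 → v m ⬝ᵥ v m = 1 := by
    intro m h1 h2
    rw [horth m m h1 h2 h1 h2, if_pos rfl]
  -- the step length, given the invariants
  have hαval : ∀ m, m + 1 ≤ j →
      gC m = (-ζ (m+1)) • v (m+1) → dC m = (ζ (m+1) * uD (m+1)) • p (m+1) →
      αC m = (uD (m+1))⁻¹ := by
    intro m hm hg hd
    have hgg : gC m ⬝ᵥ gC m = ζ (m+1) * ζ (m+1) := by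
      rw [hg, smul_dotProduct, dotProduct_smul, hvv1 (m+1) (by omega) (by omega)]
      simp only [smul_eq_mul, mul_one]; ring
    have hdd : dC m ⬝ᵥ (A *ᵥ dC m)
        = (ζ (m+1) * uD (m+1)) * ((ζ (m+1) * uD (m+1)) * (uD (m+1))⁻¹) := by
      rw [hd, Matrix.mulVec_smul, smul_dotProduct, dotProduct_smul, hpAp m (by omega)]
      simp only [smul_eq_mul]
    rw [hαC, hgg, hdd]
    have hune := huDne m (by omega)
    have hζne' := hζn m (by omega)
    field_simp
  -- the main induction
  have key : ∀ m, m + 1 ≤ j →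
      gC m = (-ζ (m+1)) • v (m+1) ∧ dC m = (ζ (m+1) * uD (m+1)) • p (m+1) := by
    intro m
    induction m with
    | zero =>
      intro hm
      show gC 0 = (-ζ 1) • v 1 ∧ dC 0 = (ζ 1 * uD 1) • p 1
      have hg0 : gC 0 = (-ζ 1) • v 1 := by
        rw [hgC 0, hxC0, show A *ᵥ x0 - b = -(b - A *ᵥ x0) from (neg_sub _ _).symm,
          hr0v, hζ1, neg_smul]
      refine ⟨hg0, ?_⟩
      rw [hdC0, hg0, neg_smul, neg_neg, hvrec0, smul_smul]
    | succ N ih =>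
      intro hm
      show gC (N+1) = (-ζ (N+2)) • v (N+2) ∧ dC (N+1) = (ζ (N+2) * uD (N+2)) • p (N+2)
      obtain ⟨hg, hd⟩ := ih (by omega)
      have hα := hαval N (by omega) hg hd
      have hζrel : ζ (N+2) = -ℓs (N+2) * ζ (N+1) := hζ (N+1) (by omega) (by omega)
      have hune := huDne N (by omega)
      have hζne' := hζn N (by omega)
      have hg1 : gC (N+1) = (-ζ (N+2)) • v (N+2) := by
        have e0 : gC (N+1) = gC N + αC N • (A *ᵥ dC N) := by
          rw [hgC (N+1), hgC N, hxC N, Matrix.mulVec_add, Matrix.mulVec_smul]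
          abel
        rw [e0, hg, hd, Matrix.mulVec_smul, hApA N (by omega), hα]
        funext r
        simp only [Pi.add_apply, Pi.smul_apply, Pi.neg_apply, smul_eq_mul]
        rw [hζrel, hls (N+1) (by omega) (by omega)]
        field_simp
        ring
      refine ⟨hg1, ?_⟩
      have hgg1 : gC (N+1) ⬝ᵥ gC (N+1) = ζ (N+2) * ζ (N+2) := by
        rw [hg1, smul_dotProduct, dotProduct_smul, hvv1 (N+2) (by omega) (by omega)]
        simp only [smul_eq_mul, mul_one]; ring
      have hgg0 : gC N ⬝ᵥ gC N = ζ (N+1) * ζ (N+1) := by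
        rw [hg, smul_dotProduct, dotProduct_smul, hvv1 (N+1) (by omega) (by omega)]
        simp only [smul_eq_mul, mul_one]; ring
      rw [hdC N, hgg1, hgg0, hg1, hd, hvrec N (by omega)]
      funext r
      simp only [Pi.add_apply, Pi.smul_apply, Pi.neg_apply, smul_eq_mul]
      rw [hζrel, hls (N+1) (by omega) (by omega)]
      field_simp
      ring
  obtain ⟨hg, hd⟩ := key k hkj
  have hα := hαval k hkj hg hd
  have hpos : 0 < uD (k+1) := huDpos k (by omega)
  have hαpos : 0 < αC k := by rw [hα]; exact inv_pos.2 hpos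
  refine ⟨hd, by rw [hα, one_div], ?_⟩
  constructor
  · intro h; linarith
  · intro h; linarith
end

section
/- Let A be symmetric tridiagonal (k+1)×(k+1) with entries given in terms of positive scalars α₀,…,α_k and β₀,…,β_{k−1} > 0 by: diagonal (1/α₀, 1/α₁ + β₀/α₀, …, 1/α_k + β_{k−1}/α_{k−1}) and off-diagonal entries √β_{j−1}/α_{j−1}. Then the LU factorization T = LU with L unit lower bidiagonal and U upper bidiagonal exists and satisfies ℓ_{i+1,i} = √β_{i−1}, u_{i,i+1} = √β_{i−1}/α_{i−1} for i = 1,…,k, and u_{j+1,j+1} = 1/α_j for j = 0,…,k. -/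
open Matrix

noncomputable def luLmat (k : ℕ) (β : ℕ → ℝ) : Matrix (Fin (k+1)) (Fin (k+1)) ℝ :=
  Matrix.of fun i l =>
    if (i : ℕ) = (l : ℕ) then 1
    else if (i : ℕ) = (l : ℕ) + 1 then Real.sqrt (β l) else 0

noncomputable def luUmat (k : ℕ) (α β : ℕ → ℝ) : Matrix (Fin (k+1)) (Fin (k+1)) ℝ :=
  Matrix.of fun i l =>
    if (i : ℕ) = (l : ℕ) then 1 / α i
    else if (l : ℕ) = (i : ℕ) + 1 then Real.sqrt (β i) / α i else 0

/-- The symmetric tridiagonal Lanczos matrix written in terms of CG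
coefficients — diagonal `(1/α₀, 1/α₁ + β₀/α₀, …, 1/α_k + β_{k−1}/α_{k−1})` and
off-diagonal entries `√β_{j−1}/α_{j−1}` — admits an LU factorization `T = L U` with `L`
unit lower bidiagonal and `U` upper bidiagonal satisfying `ℓ_{i+1,i} = √β_{i−1}`,
`u_{i,i+1} = √β_{i−1}/α_{i−1}`, and `u_{j+1,j+1} = 1/α_j`. -/
theorem lanczos_tridiagonal_lu
    (k : ℕ) (α β : ℕ → ℝ)
    (hα : ∀ i, i ≤ k → 0 < α i)
    (hβ : ∀ i, i < k → 0 < β i)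
    (T : Matrix (Fin (k+1)) (Fin (k+1)) ℝ)
    (hdiag : ∀ i : Fin (k+1),
      T i i = if (i : ℕ) = 0 then 1 / α 0
              else 1 / α i + β ((i : ℕ) - 1) / α ((i : ℕ) - 1))
    (hsuper : ∀ i : ℕ, ∀ h : i < k,
      T ⟨i, by omega⟩ ⟨i + 1, by omega⟩ = Real.sqrt (β i) / α i)
    (hsub : ∀ i : ℕ, ∀ h : i < k,
      T ⟨i + 1, by omega⟩ ⟨i, by omega⟩ = Real.sqrt (β i) / α i)
    (hband : ∀ i l : Fin (k+1), (i : ℕ) + 1 < (l : ℕ) ∨ (l : ℕ) + 1 < (i : ℕ) →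
      T i l = 0) :
    ∃ L U : Matrix (Fin (k+1)) (Fin (k+1)) ℝ,
      -- L is unit lower bidiagonal
      (∀ i : Fin (k+1), L i i = 1) ∧
      (∀ i l : Fin (k+1), (i : ℕ) ≠ (l : ℕ) → (i : ℕ) ≠ (l : ℕ) + 1 → L i l = 0) ∧
      -- U is upper bidiagonal
      (∀ i l : Fin (k+1), (i : ℕ) ≠ (l : ℕ) → (l : ℕ) ≠ (i : ℕ) + 1 → U i l = 0) ∧
      -- T = L * U
      T = L * U ∧
      -- entries of the factors
      (∀ i : ℕ, ∀ h : i < k,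
        L ⟨i + 1, by omega⟩ ⟨i, by omega⟩ = Real.sqrt (β i) ∧
        U ⟨i, by omega⟩ ⟨i + 1, by omega⟩ = Real.sqrt (β i) / α i) ∧
      (∀ i : ℕ, ∀ h : i ≤ k, U ⟨i, by omega⟩ ⟨i, by omega⟩ = 1 / α i) := by
  classical
  refine ⟨luLmat k β, luUmat k α β, ?_, ?_, ?_, ?_, ?_, ?_⟩
  · intro i; simp [luLmat]
  · intro i l h1 h2; simp [luLmat, h1, h2]
  · intro i l h1 h2
    simp only [luUmat, Matrix.of_apply]
    rw [if_neg h1, if_neg h2]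
  · ext i l
    rw [Matrix.mul_apply]
    have key : ∀ j : Fin (k+1), luLmat k β i j * luUmat k α β j l =
        (if i = j then luUmat k α β j l else 0)
        + (if (i : ℕ) = (j : ℕ) + 1 then Real.sqrt (β j) * luUmat k α β j l else 0) := by
      intro j
      by_cases hij : i = j
      · subst hij
        simp [luLmat, show ¬ ((i : ℕ) = (i : ℕ) + 1) by omega]
      · have hv : (i : ℕ) ≠ (j : ℕ) := fun h => hij (Fin.val_injective h)
        by_cases h2 : (i : ℕ) = (j : ℕ) + 1
        · simp only [luLmat, Matrix.of_apply, if_neg hv, if_pos h2, if_neg hij]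
          ring
        · simp [luLmat, hv, h2, hij]
    rw [Finset.sum_congr rfl (fun j _ => key j), Finset.sum_add_distrib,
      Finset.sum_ite_eq Finset.univ i (fun j => luUmat k α β j l)]
    simp only [Finset.mem_univ, if_pos]
    by_cases hi0 : (i : ℕ) = 0
    · have hz : ∀ j : Fin (k+1), j ∈ (Finset.univ : Finset (Fin (k+1))) →
          (if (i : ℕ) = (j : ℕ) + 1 then Real.sqrt (β j) * luUmat k α β j l else 0) = 0 := by
        intro j _; rw [if_neg (by omega)]
      rw [Finset.sum_eq_zero hz, add_zero]
      by_cases hil : (i : ℕ) = (l : ℕ)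
      · have : i = l := Fin.val_injective hil
        subst this
        rw [hdiag i, if_pos hi0]
        simp [luUmat, hi0]
      · by_cases hsl : (l : ℕ) = (i : ℕ) + 1
        · have hik : (i : ℕ) < k := by omega
          have hT : T i l = Real.sqrt (β (i : ℕ)) / α (i : ℕ) := by
            convert hsuper (i : ℕ) hik using 2
            exact Fin.ext hsl
          rw [hT]
          simp only [luUmat, Matrix.of_apply]
          rw [if_neg (by omega), if_pos (by omega)]
        · rw [hband i l (by omega)]
          simp only [luUmat, Matrix.of_apply]
          rw [if_neg (by omega), if_neg (by omega)]
    · obtain ⟨j0, hj0⟩ : ∃ j0 : Fin (k+1), (j0 : ℕ) + 1 = (i : ℕ) :=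
        ⟨⟨(i : ℕ) - 1, by omega⟩, by simp; omega⟩
      have hrw : ∀ j : Fin (k+1), j ∈ (Finset.univ : Finset (Fin (k+1))) →
          (if (i : ℕ) = (j : ℕ) + 1 then Real.sqrt (β j) * luUmat k α β j l else 0)
          = (if j0 = j then Real.sqrt (β j) * luUmat k α β j l else 0) := by
        intro j _
        by_cases h : (i : ℕ) = (j : ℕ) + 1
        · rw [if_pos h, if_pos (Fin.ext (by omega))]
        · rw [if_neg h, if_neg (fun he => h (by rw [Fin.ext_iff] at he; omega))]
      rw [Finset.sum_congr rfl hrw,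
        Finset.sum_ite_eq Finset.univ j0 (fun j => Real.sqrt (β j) * luUmat k α β j l)]
      simp only [Finset.mem_univ, if_pos]
      by_cases hil : (i : ℕ) = (l : ℕ)
      · have : i = l := Fin.val_injective hil
        subst this
        rw [hdiag i, if_neg hi0]
        have h1 : luUmat k α β i i = 1 / α (i : ℕ) := by simp [luUmat]
        have h2 : luUmat k α β j0 i = Real.sqrt (β (j0 : ℕ)) / α (j0 : ℕ) := by
          simp only [luUmat, Matrix.of_apply]
          rw [if_neg (by omega), if_pos (by omega)]
        rw [h1, h2, show (i : ℕ) - 1 = (j0 : ℕ) by omega]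
        have hb : 0 ≤ β ((j0 : ℕ)) := le_of_lt (hβ _ (by omega))
        congr 1
        rw [← mul_div_assoc, Real.mul_self_sqrt hb]
      · by_cases hsl : (l : ℕ) = (i : ℕ) + 1
        · have hik : (i : ℕ) < k := by omega
          have hT : T i l = Real.sqrt (β (i : ℕ)) / α (i : ℕ) := by
            convert hsuper (i : ℕ) hik using 2
            exact Fin.ext hsl
          have h1 : luUmat k α β i l = Real.sqrt (β (i : ℕ)) / α (i : ℕ) := by
            simp only [luUmat, Matrix.of_apply]
            rw [if_neg (by omega), if_pos (by omega)]
          have h2 : luUmat k α β j0 l = 0 := by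
            simp only [luUmat, Matrix.of_apply]
            rw [if_neg (by omega), if_neg (by omega)]
          rw [hT, h1, h2, mul_zero, add_zero]
        · by_cases hsub' : (i : ℕ) = (l : ℕ) + 1
          · have hlk : (l : ℕ) < k := by omega
            have hT : T i l = Real.sqrt (β (l : ℕ)) / α (l : ℕ) := by
              convert hsub (l : ℕ) hlk using 2
              exact Fin.ext hsub' 
            have h1 : luUmat k α β i l = 0 := by
              simp only [luUmat, Matrix.of_apply]
              rw [if_neg (by omega), if_neg (by omega)]
            have h2 : luUmat k α β j0 l = 1 / α (j0 : ℕ) := by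
              simp only [luUmat, Matrix.of_apply]
              rw [if_pos (by omega)]
            rw [hT, h1, h2, zero_add, mul_one_div,
              show (j0 : ℕ) = (l : ℕ) by omega]
          · rw [hband i l (by omega)]
            have h1 : luUmat k α β i l = 0 := by
              simp only [luUmat, Matrix.of_apply]
              rw [if_neg (by omega), if_neg (by omega)]
            have h2 : luUmat k α β j0 l = 0 := by
              simp only [luUmat, Matrix.of_apply]
              rw [if_neg (by omega), if_neg (by omega)]
            rw [h1, h2, mul_zero, add_zero]
  · intro i h
    constructor
    · simp only [luLmat, Matrix.of_apply]
      rw [if_neg (by simp), if_pos (by simp)]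
    · simp only [luUmat, Matrix.of_apply]
      rw [if_neg (by simp), if_pos (by simp)]
  · intro i h
    simp [luUmat]
end
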